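/- arXiv:1511.05140 — 3 statements merged into one kernel-verified Lean document; each statement's English description precedes it below -/
import Mathlib

section
/- Let (ξ_i)_{i≥1} be i.i.d. with law μ. Fix an integer j ≥ 1 and reals a_1, …, a_j, and suppose the event E = { Σ_{i=1}^{k} ξ_i < a_k for all 1 ≤ k ≤ j } has positive probability. Then there exist, on a common probability space, random vectors (ξ̂_1, …, ξ̂_j) and (ζ_1, …, ζ_j) such that (ξ̂_1, …, ξ̂_j) has the conditional law of (ξ_1, …, ξ_j) given E, the (ζ_i) are i.i.d. with law μ, and ξ̂_i ≤ ζ_i almost surely for every 1 ≤ i ≤ j. (Spacings conditioned on the continuation of a wave are coordinatewise stochastically dominated by i.i.d.(μ) spacings.) -/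
open MeasureTheory ProbabilityTheory Filter

noncomputable section

/-- The parameters of the spatial queue model: a "comfort zone" `[cm, cp]` with `0 < cm < cp`,
and a probability measure `μ` on `[cm, cp]` with mean `1` and positive variance. -/
structure QueueParams where
  cm : ℝ
  cp : ℝ
  cm_pos : 0 < cm
  cm_lt_cp : cm < cp
  μ : Measure ℝ
  μ_prob : IsProbabilityMeasure μ
  μ_supp : μ (Set.Icc cm cp) = 1
  μ_mean : ∫ x, x ∂μ = 1
  μ_var_pos : 0 < ∫ x, (x - 1) ^ 2 ∂μ

/-- The standard deviation `σ` of `μ`. -/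
def QueueParams.sigma (Q : QueueParams) : ℝ := Real.sqrt (∫ x, (x - 1) ^ 2 ∂Q.μ)

/-- Membership in the state space `𝕏`: configurations `0 = x_0 < x_1 < ⋯` with successive
spacings in `[cm, cp]`. -/
def QueueParams.IsConfig (Q : QueueParams) (x : ℕ → ℝ) : Prop :=
  x 0 = 0 ∧ ∀ i : ℕ, x (i + 1) - x i ∈ Set.Icc Q.cm Q.cp

/-- `q(j,y)`: the probability that the symmetrized random walk
`S^{sym}_k = Σ_{i=1}^k (ξ'_i - ξ''_i)` (with `ξ', ξ''` independent i.i.d.(μ)) satisfies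
`max_{1 ≤ k ≤ j} S^{sym}_k ≤ y`. -/
def QueueParams.symWalkProb (Q : QueueParams) (j : ℕ) (y : ℝ) : ℝ :=
  haveI := Q.μ_prob
  ((Measure.pi fun _ : Fin j => Q.μ.prod Q.μ)
    {v : Fin j → ℝ × ℝ | ∀ k ∈ Finset.Icc 1 j,
      (∑ i ∈ Finset.univ.filter (fun i : Fin j => (i : ℕ) < k), ((v i).1 - (v i).2)) ≤ y}).toReal

/-- `q_{j,y}(x_1, …, x_j)`: the probability that
`max_{1 ≤ k ≤ j} Σ_{i=1}^k (ξ'_i - x_i) ≤ y`, where `(ξ'_i)` is i.i.d.(μ). -/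
def QueueParams.condWalkProb (Q : QueueParams) (j : ℕ) (y : ℝ) (x : ℕ → ℝ) : ℝ :=
  haveI := Q.μ_prob
  ((Measure.pi fun _ : Fin j => Q.μ)
    {v : Fin j → ℝ | ∀ k ∈ Finset.Icc 1 j,
      (∑ i ∈ Finset.univ.filter (fun i : Fin j => (i : ℕ) < k), v i)
        - (∑ i ∈ Finset.Icc 1 k, x i) ≤ y}).toReal

/-- A sequence `(x_1, …, x_j)` is `(j,y)`-good if `q_{j,y}(x_1,…,x_j) ≤ 2 q(j,y)`. -/
def QueueParams.IsGood (Q : QueueParams) (j : ℕ) (y : ℝ) (x : ℕ → ℝ) : Prop :=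
  Q.condWalkProb j y x ≤ 2 * Q.symWalkProb j y

/-- The spatial queue process with parameters `Q`, driven by an i.i.d.(μ) array
`(ξ i t)_{i ≥ 1, t ≥ 1}`, started from an arbitrary (deterministic) initial
configuration `x0 ∈ 𝕏`.  `X i t` is the position of the rank-`i` customer at time `t`,
defined by the recursion (1)–(3) of the paper: at step `t`, customer `i ≥ 1` moves to
`ξ_1(t) + ⋯ + ξ_i(t)` if `Σ_{m ≤ k} ξ_m(t) < X_{k+1}(t-1) - cp` for all `1 ≤ k ≤ i`
(i.e. `i < W(t)`), and otherwise stays at `X_{i+1}(t-1)`. -/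
structure QueueProcess (Q : QueueParams) (Ω : Type) [MeasurableSpace Ω] where
  P : Measure Ω
  P_prob : IsProbabilityMeasure P
  ξ : ℕ → ℕ → Ω → ℝ
  ξ_meas : ∀ i t, 1 ≤ i → 1 ≤ t → Measurable (ξ i t)
  ξ_range : ∀ i t ω, 1 ≤ i → 1 ≤ t → ξ i t ω ∈ Set.Icc Q.cm Q.cp
  ξ_law : ∀ i t, 1 ≤ i → 1 ≤ t → P.map (ξ i t) = Q.μ
  ξ_indep : iIndepFun (m := fun _ : ℕ × ℕ => (inferInstance : MeasurableSpace ℝ))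
    (fun p : ℕ × ℕ => ξ (p.1 + 1) (p.2 + 1)) P
  X : ℕ → ℕ → Ω → ℝ
  X_meas : ∀ i t, Measurable (X i t)
  x0 : ℕ → ℝ
  x0_config : Q.IsConfig x0
  X_init : ∀ i ω, X i 0 ω = x0 i
  X_zero : ∀ t ω, X 0 t ω = 0
  X_move : ∀ t ω i, 1 ≤ t → 1 ≤ i →
    (∀ k ∈ Finset.Icc 1 i, (∑ m ∈ Finset.Icc 1 k, ξ m t ω) < X (k + 1) (t - 1) ω - Q.cp) →
    X i t ω = ∑ m ∈ Finset.Icc 1 i, ξ m t ω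
  X_stay : ∀ t ω i, 1 ≤ t → 1 ≤ i →
    ¬ (∀ k ∈ Finset.Icc 1 i, (∑ m ∈ Finset.Icc 1 k, ξ m t ω) < X (k + 1) (t - 1) ω - Q.cp) →
    X i t ω = X (i + 1) (t - 1) ω

namespace QueueProcess

variable {Q : QueueParams} {Ω : Type} [MeasurableSpace Ω]

/-- The wave length `W(t)` at step `t`: the least `i ≥ 1` with
`ξ_1(t) + ⋯ + ξ_i(t) ≥ X_{i+1}(t-1) - cp`, or `∞` if there is no such `i`. -/
def W (qp : QueueProcess Q Ω) (t : ℕ) (ω : Ω) : ℕ∞ :=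
  ⨅ n ∈ {n : ℕ | 1 ≤ n ∧
    qp.X (n + 1) (t - 1) ω - Q.cp ≤ ∑ m ∈ Finset.Icc 1 n, qp.ξ m t ω}, (n : ℕ∞)

/-- `ρ⁺(j) = limsup_{τ→∞} τ⁻¹ Σ_{t=1}^τ P(W(t) > j)`. -/
def rhoPlus (qp : QueueProcess Q Ω) (j : ℕ) : ℝ :=
  Filter.limsup (fun τ : ℕ =>
    (τ : ℝ)⁻¹ * ∑ t ∈ Finset.Icc 1 τ, (qp.P {ω | (j : ℕ∞) < qp.W t ω}).toReal) Filter.atTop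

/-- `ρ₋(j) = liminf_{τ→∞} τ⁻¹ Σ_{t=1}^τ P(W(t) > j)`. -/
def rhoMinus (qp : QueueProcess Q Ω) (j : ℕ) : ℝ :=
  Filter.liminf (fun τ : ℕ =>
    (τ : ℝ)⁻¹ * ∑ t ∈ Finset.Icc 1 τ, (qp.P {ω | (j : ℕ∞) < qp.W t ω}).toReal) Filter.atTop

/-- `X*_s(t) = X_{s-t}(t)`: the position of the individual of initial rank `s` at time `t ≤ s`. -/
def Xstar (qp : QueueProcess Q Ω) (s t : ℕ) (ω : Ω) : ℝ := qp.X (s - t) t ω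

/-- `L_s(t0)`: the time since the last move of individual `s`, i.e. the largest `ℓ ≤ t0` with
`X*_s(t0) = X*_s(t0 - ℓ)` (equal to `t0` if individual `s` has never moved). -/
def Lmove (qp : QueueProcess Q Ω) (s t0 : ℕ) (ω : Ω) : ℕ :=
  sSup {ℓ : ℕ | ℓ ≤ t0 ∧ qp.Xstar s t0 ω = qp.Xstar s (t0 - ℓ) ω}

/-- The event `A_{s+1}(t0) = {L_s(t0) = L_{s+1}(t0) < t0}` that individuals `s` and `s+1`
are in the same block at time `t0`. -/
def blockEvent (qp : QueueProcess Q Ω) (s t0 : ℕ) : Set Ω :=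
  {ω | qp.Lmove s t0 ω = qp.Lmove (s + 1) t0 ω ∧ qp.Lmove s t0 ω < t0}

/-- `M(t0) = min{s ≥ t0 : X*_s(t0) = X*_s(0)}` (`∞` if there is no such `s`). -/
def Mfirst (qp : QueueProcess Q Ω) (t0 : ℕ) (ω : Ω) : ℕ∞ :=
  ⨅ s ∈ {s : ℕ | t0 ≤ s ∧ qp.Xstar s t0 ω = qp.Xstar s 0 ω}, (s : ℕ∞)

/-- The natural filtration `ℱ(t) = σ(𝐗(u), 0 ≤ u ≤ t)` of the process. -/
def F (qp : QueueProcess Q Ω) (t : ℕ) : MeasurableSpace Ω :=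
  ⨆ u ∈ Set.Iic t, MeasurableSpace.comap (fun ω (i : ℕ) => qp.X i u ω)
    (inferInstance : MeasurableSpace (ℕ → ℝ))

/-- The σ-field generated by `𝐗_{[s]}(t) = (X_i(t), 0 ≤ i ≤ s - t)`, the positions of
individual `s` and the customers ahead of it at time `t`. -/
def sigmaXupto (qp : QueueProcess Q Ω) (s t : ℕ) : MeasurableSpace Ω :=
  MeasurableSpace.comap (fun ω (i : ℕ) => if i ≤ s - t then qp.X i t ω else 0)
    (inferInstance : MeasurableSpace (ℕ → ℝ))

/-- The σ-field `𝒢_s(t0) = σ(𝐗_{[s]}(t), 0 ≤ t ≤ t0; A_{s+1}(t0))`. -/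
def Gfield (qp : QueueProcess Q Ω) (s t0 : ℕ) : MeasurableSpace Ω :=
  (⨆ t ∈ Set.Iic t0, qp.sigmaXupto s t)
    ⊔ MeasurableSpace.generateFrom {qp.blockEvent s t0}

/-- The event `A_t = {W(t) > s - t}` that individual `s` moves at time `t`. -/
def waveA (qp : QueueProcess Q Ω) (s t : ℕ) : Set Ω :=
  {ω | ((s - t : ℕ) : ℕ∞) < qp.W t ω}

/-- The event `C_t = {W(t) > s - t + j}` of a long wave at time `t`. -/
def waveC (qp : QueueProcess Q Ω) (s j t : ℕ) : Set Ω :=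
  {ω | ((s - t + j : ℕ) : ℕ∞) < qp.W t ω}

/-- The event `B_t` that the long wave at time `t` is good. -/
def waveB (qp : QueueProcess Q Ω) (s j : ℕ) (y : ℝ) (t : ℕ) : Set Ω :=
  qp.waveC s j t ∩ {ω | Q.IsGood j y (fun i => qp.ξ (s - t + i) t ω)}

/-- The successive times `T_u` of good long waves (`T_0 = 0` by convention). -/
def Tgood (qp : QueueProcess Q Ω) (s j : ℕ) (y : ℝ) : ℕ → Ω → ℕ∞
  | 0 => fun _ => 0
  | u + 1 => fun ω =>
      ⨅ t ∈ {t : ℕ | qp.Tgood s j y u ω < (t : ℕ∞) ∧ ω ∈ qp.waveB s j y t}, (t : ℕ∞)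

/-- `N_A(n) = Σ_{t=1}^n 1_{A_t}`, the number of waves up to time `n` that move individual `s`. -/
def NA (qp : QueueProcess Q Ω) (s n : ℕ) (ω : Ω) : ℝ :=
  ∑ t ∈ Finset.Icc 1 n, Set.indicator (qp.waveA s t) (fun _ => (1 : ℝ)) ω

/-- `G(t,x) = t + F_t(x)` where `F_t(x) = max{k : X_k(t) ≤ x} - x` is the centered counting
function of the time-`t` configuration. -/
def G (qp : QueueProcess Q Ω) (t : ℕ) (x : ℝ) (ω : Ω) : ℝ :=
  (t : ℝ) + ((sSup {k : ℕ | qp.X k t ω ≤ x} : ℕ) : ℝ) - x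

end QueueProcess

/-- A coupling, on a sample space `Ω'`, witnessing stochastic domination:
`(ξ̂_1, …, ξ̂_j)` has joint law `ν`, `(ζ_i)_{i ≥ 1}` is i.i.d.(μ), and `ξ̂_i ≤ ζ_i` a.s.
for every `1 ≤ i ≤ j`. -/
structure DominationCoupling (Q : QueueParams) (j : ℕ) (ν : Measure (Fin j → ℝ))
    (Ω' : Type) [MeasurableSpace Ω'] where
  P' : Measure Ω'
  P'_prob : IsProbabilityMeasure P'
  xihat : ℕ → Ω' → ℝ
  zeta : ℕ → Ω' → ℝ
  xihat_meas : ∀ i, Measurable (xihat i)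
  zeta_meas : ∀ i, Measurable (zeta i)
  xihat_law : P'.map (fun ω' (i : Fin j) => xihat ((i : ℕ) + 1) ω') = ν
  zeta_indep : ProbabilityTheory.iIndepFun (m := fun _ : ℕ => (inferInstance : MeasurableSpace ℝ))
    (fun i : ℕ => zeta (i + 1)) P'
  zeta_law : ∀ i, 1 ≤ i → P'.map (zeta i) = Q.μ
  dominated : ∀ᵐ ω' ∂P', ∀ i ∈ Finset.Icc 1 j, xihat i ω' ≤ zeta i ω'

namespace SpacingsAux

open Set


/-- Uniform measure on `(0,1)`. -/
def nu0 : Measure ℝ := volume.restrict (Set.Ioo 0 1)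

instance : IsProbabilityMeasure nu0 := ⟨by simp [nu0, Real.volume_Ioo]⟩

/-- Generalized inverse CDF. -/
def Qf (m : Measure ℝ) (r : ℝ) : ℝ := sInf {x | ENNReal.ofReal r ≤ m (Set.Iic x)}

/-- Truncated quantile function, monotone on all of `ℝ`. -/
def Qg (c : ℝ) (m : Measure ℝ) (r : ℝ) : ℝ := if 0 < r then Qf m (min r 1) else c

section QfLemmas

variable {m : Measure ℝ} {c d : ℝ} (hm : IsProbabilityMeasure m) (hcd : c ≤ d)
  (hsupp : m (Set.Icc c d) = 1)

include hm hsupp in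
lemma iic_one_of_ge (x : ℝ) (hx : d ≤ x) : m (Set.Iic x) = 1 := by
  have h1 : m (Set.Icc c d) ≤ m (Set.Iic x) := measure_mono (fun t ht => le_trans ht.2 hx)
  exact le_antisymm prob_le_one (hsupp ▸ h1)

include hm hsupp in
lemma iic_zero_of_lt (x : ℝ) (hx : x < c) : m (Set.Iic x) = 0 := by
  have hc : m (Set.Icc c d)ᶜ = 0 := by
    rw [measure_compl measurableSet_Icc (measure_ne_top m _), hsupp, hm.measure_univ, tsub_self]
  refine measure_mono_null (fun t ht => ?_) hc
  simp only [Set.mem_compl_iff, Set.mem_Icc, not_and_or, not_le]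
  exact Or.inl (lt_of_le_of_lt ht hx)

include hm hcd hsupp in
lemma qf_set_nonempty {r : ℝ} (hr : r ≤ 1) : d ∈ {x | ENNReal.ofReal r ≤ m (Set.Iic x)} := by
  rw [Set.mem_setOf_eq, iic_one_of_ge hm hsupp d le_rfl]
  exact le_trans (ENNReal.ofReal_le_ofReal hr) (by simp)

include hm hsupp in
lemma qf_set_subset {r : ℝ} (hr : 0 < r) :
    {x | ENNReal.ofReal r ≤ m (Set.Iic x)} ⊆ Set.Ici c := by
  intro x hx
  by_contra h
  rw [Set.mem_setOf_eq, iic_zero_of_lt hm hsupp x (not_le.mp (fun hc => h hc))] at hx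
  exact absurd (le_antisymm (le_of_le_of_eq hx rfl) zero_le) (by
    simp only [ENNReal.ofReal_eq_zero, not_le]
    exact hr)

include hm hcd hsupp in
lemma qf_le_iff {r x : ℝ} (hr0 : 0 < r) (hr1 : r ≤ 1) :
    Qf m r ≤ x ↔ ENNReal.ofReal r ≤ m (Set.Iic x) := by
  set S := {x | ENNReal.ofReal r ≤ m (Set.Iic x)} with hS
  have hne : S.Nonempty := ⟨d, qf_set_nonempty hm hcd hsupp hr1⟩
  have hbdd : BddBelow S := ⟨c, fun y hy => qf_set_subset hm hsupp hr0 hy⟩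
  have hup : ∀ ⦃y z : ℝ⦄, y ∈ S → y ≤ z → z ∈ S := fun y z hy hyz =>
    le_trans hy (measure_mono (Set.Iic_subset_Iic.mpr hyz))
  constructor
  · intro h
    -- first show sInf S ∈ S
    have hmem : sInf S ∈ S := by
      have hseq : ∀ n : ℕ, sInf S + (1 : ℝ) / (n + 1) ∈ S := by
        intro n
        obtain ⟨y, hy, hlt⟩ := Real.lt_sInf_add_pos hne (by positivity : (0:ℝ) < 1 / (n+1))
        exact hup hy hlt.le
      have hIic : Set.Iic (sInf S) = ⋂ n : ℕ, Set.Iic (sInf S + 1 / (n + 1)) := by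
        ext t
        simp only [Set.mem_Iic, Set.mem_iInter]
        constructor
        · intro ht n
          have hp : (0:ℝ) < 1 / (n+1) := by positivity
          linarith
        · intro ht
          by_contra hlt
          push_neg at hlt
          obtain ⟨n, hn⟩ := exists_nat_one_div_lt (by linarith : (0:ℝ) < t - sInf S)
          have := ht n; linarith
      have htend : Filter.Tendsto (fun n : ℕ => m (Set.Iic (sInf S + 1 / (n + 1)))) Filter.atTop
          (nhds (m (Set.Iic (sInf S)))) := by
        rw [hIic]
        refine tendsto_measure_iInter_atTop (fun n => measurableSet_Iic.nullMeasurableSet) ?_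
          ⟨0, measure_ne_top _ _⟩
        intro i j hij
        refine Set.Iic_subset_Iic.mpr (by
          have : (1:ℝ) / (j + 1) ≤ 1 / (i + 1) := by
            apply one_div_le_one_div_of_le (by positivity)
            exact_mod_cast Nat.succ_le_succ hij
          linarith)
      exact ge_of_tendsto htend (Filter.Eventually.of_forall fun n => hseq n)
    exact hup hmem h
  · intro h
    exact csInf_le hbdd h

include hm hcd hsupp in
lemma qf_mem_Icc {r : ℝ} (hr0 : 0 < r) (hr1 : r ≤ 1) : Qf m r ∈ Set.Icc c d := by
  constructor
  · exact le_csInf ⟨d, qf_set_nonempty hm hcd hsupp hr1⟩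
      (fun y hy => qf_set_subset hm hsupp hr0 hy)
  · exact csInf_le ⟨c, fun y hy => qf_set_subset hm hsupp hr0 hy⟩
      (qf_set_nonempty hm hcd hsupp hr1)

include hm hcd hsupp in
lemma qg_monotone : Monotone (Qg c m) := by
  intro r r' hrr'
  unfold Qg
  by_cases hr : 0 < r
  · have hr' : 0 < r' := lt_of_lt_of_le hr hrr'
    rw [if_pos hr, if_pos hr']
    refine csInf_le_csInf ⟨c, fun y hy => qf_set_subset hm hsupp (by positivity) hy⟩
      ⟨d, qf_set_nonempty hm hcd hsupp (min_le_right _ _)⟩ ?_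
    intro x hx
    exact le_trans (ENNReal.ofReal_le_ofReal (by simp [le_min_iff, min_le_right, hrr',
      le_trans (min_le_left r 1) hrr'] : min r 1 ≤ min r' 1)) hx
  · rw [if_neg hr]
    by_cases hr' : 0 < r'
    · rw [if_pos hr']
      exact (qf_mem_Icc hm hcd hsupp (by positivity) (min_le_right _ _)).1
    · rw [if_neg hr']

include hm hcd hsupp in
lemma qg_measurable : Measurable (Qg c m) := (qg_monotone hm hcd hsupp).measurable

include hm hcd hsupp in
lemma qg_mem_Icc (r : ℝ) : Qg c m r ∈ Set.Icc c d := by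
  unfold Qg
  by_cases hr : 0 < r
  · rw [if_pos hr]; exact qf_mem_Icc hm hcd hsupp (by positivity) (min_le_right _ _)
  · rw [if_neg hr]; exact ⟨le_rfl, hcd⟩

include hm hcd hsupp in
lemma map_qg : nu0.map (Qg c m) = m := by
  have hmeas := qg_measurable hm hcd hsupp
  have : IsProbabilityMeasure (nu0.map (Qg c m)) := Measure.isProbabilityMeasure_map hmeas.aemeasurable
  refine Measure.ext_of_Iic (nu0.map (Qg c m)) m (fun x => ?_)
  rw [Measure.map_apply hmeas measurableSet_Iic]
  have hset : Qg c m ⁻¹' Set.Iic x ∩ Set.Ioo 0 1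
      = {r | ENNReal.ofReal r ≤ m (Set.Iic x)} ∩ Set.Ioo 0 1 := by
    ext r
    simp only [Set.mem_inter_iff, Set.mem_preimage, Set.mem_Iic, Set.mem_setOf_eq, Set.mem_Ioo,
      and_congr_left_iff]
    intro hr
    rw [Qg, if_pos hr.1, min_eq_left hr.2.le, qf_le_iff hm hcd hsupp hr.1 hr.2.le]
  have : nu0 (Qg c m ⁻¹' Set.Iic x) = volume (Qg c m ⁻¹' Set.Iic x ∩ Set.Ioo 0 1) := by
    rw [nu0, Measure.restrict_apply (hmeas measurableSet_Iic)]
  rw [this, hset]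
  have hfin : m (Set.Iic x) ≠ ⊤ := measure_ne_top _ _
  have hle1 : m (Set.Iic x) ≤ 1 := prob_le_one
  have hofr : ∀ r : ℝ, (ENNReal.ofReal r ≤ m (Set.Iic x)) ↔ r ≤ (m (Set.Iic x)).toReal := by
    intro r
    rw [ENNReal.ofReal_le_iff_le_toReal hfin]
  have hset2 : {r : ℝ | ENNReal.ofReal r ≤ m (Set.Iic x)} ∩ Set.Ioo 0 1
      = Set.Ioo 0 1 ∩ Set.Iic ((m (Set.Iic x)).toReal) := by
    ext r
    simp only [Set.mem_inter_iff, Set.mem_setOf_eq, Set.mem_Ioo, Set.mem_Iic]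
    rw [hofr]; tauto
  rw [hset2]
  set t := (m (Set.Iic x)).toReal with ht
  have ht0 : 0 ≤ t := ENNReal.toReal_nonneg
  have ht1 : t ≤ 1 := by
    rw [ht]
    exact ENNReal.toReal_le_of_le_ofReal zero_le_one (by simpa using hle1)
  have hvol : volume (Set.Ioo 0 1 ∩ Set.Iic t) = ENNReal.ofReal t := by
    rcases lt_or_eq_of_le ht1 with h1 | h1
    · have : Set.Ioo (0:ℝ) 1 ∩ Set.Iic t = Set.Ioc 0 t := by
        ext r
        simp only [Set.mem_inter_iff, Set.mem_Ioo, Set.mem_Iic, Set.mem_Ioc]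
        constructor
        · rintro ⟨⟨h2, _⟩, h4⟩; exact ⟨h2, h4⟩
        · rintro ⟨h2, h3⟩; exact ⟨⟨h2, lt_of_le_of_lt h3 h1⟩, h3⟩
      rw [this, Real.volume_Ioc, sub_zero]
    · have : Set.Ioo (0:ℝ) 1 ∩ Set.Iic t = Set.Ioo 0 1 := by
        rw [Set.inter_eq_left]
        intro r hr
        simp only [Set.mem_Iic]
        rw [h1]; exact hr.2.le
      rw [this, Real.volume_Ioo, sub_zero, h1]
  rw [hvol, ht, ENNReal.ofReal_toReal hfin]

include hm hcd hsupp in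
lemma qg_le_qg {m' : Measure ℝ} (hm' : IsProbabilityMeasure m') (hsupp' : m' (Set.Icc c d) = 1)
    (hdom : ∀ x, m (Set.Iic x) ≤ m' (Set.Iic x)) (r : ℝ) :
    Qg c m' r ≤ Qg c m r := by
  unfold Qg
  by_cases hr : 0 < r
  · rw [if_pos hr, if_pos hr]
    refine csInf_le_csInf ⟨c, fun y hy => qf_set_subset hm' hsupp' (by positivity) hy⟩
      ⟨d, qf_set_nonempty hm hcd hsupp (min_le_right _ _)⟩ ?_
    intro x hx
    exact le_trans hx (hdom x)
  · rw [if_neg hr, if_neg hr]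

end QfLemmas

lemma qg_family_measurable {α : Type*} [MeasurableSpace α] {c d : ℝ} (hcd : c ≤ d)
    (F : α → Measure ℝ) (hF : ∀ s, IsProbabilityMeasure (F s))
    (hFsupp : ∀ s, F s (Set.Icc c d) = 1)
    (hFm : ∀ x : ℝ, Measurable fun s => F s (Set.Iic x)) :
    Measurable fun p : α × ℝ => Qg c (F p.1) p.2 := by
  apply measurable_of_Iio
  intro x
  have hkey : ∀ p : α × ℝ, 0 < p.2 →
      (Qg c (F p.1) p.2 < x ↔
        ∃ q : ℚ, (q : ℝ) < x ∧ ENNReal.ofReal (min p.2 1) ≤ F p.1 (Set.Iic (q : ℝ))) := by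
    intro p hp
    rw [Qg, if_pos hp]
    constructor
    · intro h
      obtain ⟨q, hq1, hq2⟩ := exists_rat_btwn h
      exact ⟨q, hq2, (qf_le_iff (hF p.1) hcd (hFsupp p.1) (lt_min hp one_pos)
        (min_le_right _ _)).mp hq1.le⟩
    · rintro ⟨q, hq1, hq2⟩
      exact lt_of_le_of_lt ((qf_le_iff (hF p.1) hcd (hFsupp p.1) (lt_min hp one_pos)
        (min_le_right _ _)).mpr hq2) hq1
  have hset : (fun p : α × ℝ => Qg c (F p.1) p.2) ⁻¹' (Set.Iio x) =
      ({p : α × ℝ | 0 < p.2} ∩ ⋃ q : ℚ, ⋃ _ : (q : ℝ) < x,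
        {p : α × ℝ | ENNReal.ofReal (min p.2 1) ≤ F p.1 (Set.Iic (q : ℝ))})
      ∪ ({p : α × ℝ | ¬ 0 < p.2} ∩ {p : α × ℝ | c < x}) := by
    ext p
    by_cases hp : 0 < p.2
    · simp only [Set.mem_preimage, Set.mem_Iio, Set.mem_union, Set.mem_inter_iff,
        Set.mem_setOf_eq, Set.mem_iUnion, hp, not_true, false_and, or_false, true_and]
      rw [hkey p hp]
      tauto
    · simp only [Set.mem_preimage, Set.mem_Iio, Set.mem_union, Set.mem_inter_iff,
        Set.mem_setOf_eq, Set.mem_iUnion, hp, false_and, false_or, not_false_iff, true_and]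
      rw [Qg, if_neg hp]
  rw [hset]
  refine MeasurableSet.union (MeasurableSet.inter ?_ ?_) (MeasurableSet.inter ?_ ?_)
  · exact measurableSet_lt measurable_const measurable_snd
  · refine MeasurableSet.iUnion fun q => MeasurableSet.iUnion fun _ => ?_
    exact measurableSet_le ((measurable_snd.min measurable_const).ennreal_ofReal)
      ((hFm (q : ℝ)).comp measurable_fst)
  · exact (measurableSet_lt measurable_const measurable_snd).compl
  · exact MeasurableSet.const _

section GG

open ENNReal

variable (μ : Measure ℝ)

/-- Iterated continuation probability: `gg μ r b s` is the probability that an i.i.d.(μ)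
walk of `r` steps started at `s` stays strictly below the successive thresholds `b 0, b 1, …`. -/
def gg : ℕ → (ℕ → ℝ) → ℝ → ℝ≥0∞
  | 0, _, _ => 1
  | (r + 1), b, s =>
      ∫⁻ t, Set.indicator (Set.Iio (b 0 - s))
        (fun t' => gg r (fun n => b (n + 1)) (s + t')) t ∂μ

/-- The unnormalized one-step conditional density. -/
def dens (b : ℕ → ℝ) (r : ℕ) (s : ℝ) : ℝ → ℝ≥0∞ :=
  Set.indicator (Set.Iio (b 0 - s)) (fun t => gg μ r (fun n => b (n + 1)) (s + t))

lemma gg_succ (b : ℕ → ℝ) (r : ℕ) (s : ℝ) :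
    gg μ (r + 1) b s = ∫⁻ t, dens μ b r s t ∂μ := rfl

variable [IsProbabilityMeasure μ]

lemma gg_le_one : ∀ (r : ℕ) (b : ℕ → ℝ) (s : ℝ), gg μ r b s ≤ 1 := by
  intro r
  induction r with
  | zero => intro b s; exact le_rfl
  | succ r ih =>
    intro b s
    rw [gg]
    calc ∫⁻ t, Set.indicator (Set.Iio (b 0 - s))
          (fun t' => gg μ r (fun n => b (n + 1)) (s + t')) t ∂μ
        ≤ ∫⁻ _, 1 ∂μ := by
          refine lintegral_mono fun t => ?_
          refine le_trans (Set.indicator_le_self _ _ t) (ih _ _)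
      _ = 1 := by simp

lemma gg_antitone (r : ℕ) (b : ℕ → ℝ) : Antitone (gg μ r b) := by
  induction r generalizing b with
  | zero => intro s s' _; exact le_rfl
  | succ r ih =>
    intro s s' hss'
    rw [gg, gg]
    refine lintegral_mono fun t => ?_
    by_cases ht : t ∈ Set.Iio (b 0 - s')
    · rw [Set.indicator_of_mem ht, Set.indicator_of_mem
        (by simp only [Set.mem_Iio] at ht ⊢; linarith : t ∈ Set.Iio (b 0 - s))]
      exact ih _ (by linarith)
    · rw [Set.indicator_of_notMem ht]
      exact zero_le

lemma dens_antitone (b : ℕ → ℝ) (r : ℕ) (s : ℝ) : Antitone (dens μ b r s) := by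
  intro t t' htt'
  unfold dens
  by_cases ht : t' ∈ Set.Iio (b 0 - s)
  · rw [Set.indicator_of_mem ht, Set.indicator_of_mem
      (by simp only [Set.mem_Iio] at ht ⊢; linarith : t ∈ Set.Iio (b 0 - s))]
    exact gg_antitone μ r _ (by linarith)
  · rw [Set.indicator_of_notMem ht]
    exact zero_le

lemma dens_le_one (b : ℕ → ℝ) (r : ℕ) (s : ℝ) (t : ℝ) : dens μ b r s t ≤ 1 :=
  le_trans (Set.indicator_le_self _ _ t) (gg_le_one μ r _ _)

lemma gg_measurable : ∀ (r : ℕ) (b : ℕ → ℝ), Measurable (gg μ r b) := by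
  intro r
  induction r with
  | zero => intro b; simp only [gg]; exact measurable_const
  | succ r ih =>
    intro b
    have hjoint : Measurable fun p : ℝ × ℝ =>
        Set.indicator (Set.Iio (b 0 - p.1))
          (fun t' => gg μ r (fun n => b (n + 1)) (p.1 + t')) p.2 := by
      have : ∀ p : ℝ × ℝ, Set.indicator (Set.Iio (b 0 - p.1))
          (fun t' => gg μ r (fun n => b (n + 1)) (p.1 + t')) p.2
          = if p.2 < b 0 - p.1 then gg μ r (fun n => b (n + 1)) (p.1 + p.2) else 0 := by
        intro p
        simp [Set.indicator_apply, Set.mem_Iio]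
      simp only [this]
      refine Measurable.ite ?_ ?_ measurable_const
      · exact measurableSet_lt measurable_snd (measurable_const.sub measurable_fst)
      · exact (ih _).comp (measurable_fst.add measurable_snd)
    exact Measurable.lintegral_prod_right' (f := fun p : ℝ × ℝ =>
      Set.indicator (Set.Iio (b 0 - p.1))
        (fun t' => gg μ r (fun n => b (n + 1)) (p.1 + t')) p.2) hjoint

lemma dens_measurable_joint (b : ℕ → ℝ) (r : ℕ) :
    Measurable fun p : ℝ × ℝ => dens μ b r p.1 p.2 := by
  have : ∀ p : ℝ × ℝ, dens μ b r p.1 p.2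
      = if p.2 < b 0 - p.1 then gg μ r (fun n => b (n + 1)) (p.1 + p.2) else 0 := by
    intro p
    unfold dens
    simp [Set.indicator_apply, Set.mem_Iio]
  simp only [this]
  refine Measurable.ite ?_ ?_ measurable_const
  · exact measurableSet_lt measurable_snd (measurable_const.sub measurable_fst)
  · exact (gg_measurable μ r _).comp (measurable_fst.add measurable_snd)

lemma dens_measurable (b : ℕ → ℝ) (r : ℕ) (s : ℝ) : Measurable (dens μ b r s) :=
  (dens_measurable_joint μ b r).comp measurable_prodMk_left

/-- The one-step conditional kernel. -/
def mker (b : ℕ → ℝ) (r : ℕ) (s : ℝ) : Measure ℝ :=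
  if gg μ (r + 1) b s = 0 then μ
  else (gg μ (r + 1) b s)⁻¹ • μ.withDensity (dens μ b r s)

lemma gg_ne_top (r : ℕ) (b : ℕ → ℝ) (s : ℝ) : gg μ r b s ≠ ∞ :=
  ne_top_of_le_ne_top one_ne_top (gg_le_one μ r b s)

instance mker_prob (b : ℕ → ℝ) (r : ℕ) (s : ℝ) : IsProbabilityMeasure (mker μ b r s) := by
  unfold mker
  by_cases h : gg μ (r + 1) b s = 0
  · rw [if_pos h]; infer_instance
  · rw [if_neg h]
    constructor
    rw [Measure.smul_apply, smul_eq_mul,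
      withDensity_apply _ MeasurableSet.univ, Measure.restrict_univ, ← gg_succ]
    exact ENNReal.inv_mul_cancel h (gg_ne_top μ (r+1) b s)

lemma mker_supp {cm cp : ℝ} (hsupp : μ (Set.Icc cm cp) = 1) (b : ℕ → ℝ) (r : ℕ) (s : ℝ) :
    mker μ b r s (Set.Icc cm cp) = 1 := by
  have hcompl : μ (Set.Icc cm cp)ᶜ = 0 := by
    rw [measure_compl measurableSet_Icc (measure_ne_top μ _), hsupp, measure_univ, tsub_self]
  have hmc : mker μ b r s (Set.Icc cm cp)ᶜ = 0 := by
    unfold mker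
    by_cases h : gg μ (r + 1) b s = 0
    · rw [if_pos h]; exact hcompl
    · rw [if_neg h, Measure.smul_apply, smul_eq_mul,
        withDensity_apply _ measurableSet_Icc.compl]
      have : ∫⁻ t in (Set.Icc cm cp)ᶜ, dens μ b r s t ∂μ ≤
          ∫⁻ _ in (Set.Icc cm cp)ᶜ, 1 ∂μ :=
        setLIntegral_mono measurable_const (fun t _ => dens_le_one μ b r s t)
      rw [setLIntegral_one, hcompl] at this
      rw [le_antisymm this zero_le, mul_zero]
  have := measure_add_measure_compl (μ := mker μ b r s) (s := Set.Icc cm cp) measurableSet_Icc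
  rw [hmc, add_zero, measure_univ] at this
  exact this

/-- Chebyshev-type correlation inequality for antitone densities. -/
lemma chebyshev_antitone {h : ℝ → ℝ≥0∞} (hmeas : Measurable h) (hanti : Antitone h)
    (hle : ∀ t, h t ≤ 1) (x : ℝ) :
    μ (Set.Iic x) * ∫⁻ t, h t ∂μ ≤ ∫⁻ t in Set.Iic x, h t ∂μ := by
  set A := ∫⁻ t in Set.Iic x, h t ∂μ with hA
  set B := ∫⁻ t in (Set.Iic x)ᶜ, h t ∂μ with hB
  set p := μ (Set.Iic x) with hp
  set q := μ (Set.Iic x)ᶜ with hq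
  have htot : ∫⁻ t, h t ∂μ = A + B := (lintegral_add_compl h measurableSet_Iic).symm
  have hpq : p + q = 1 := by rw [hp, hq, measure_add_measure_compl measurableSet_Iic, measure_univ]
  have hAp : h x * p ≤ A := by
    rw [hA]
    calc h x * p = ∫⁻ _ in Set.Iic x, h x ∂μ := by rw [setLIntegral_const, hp]
      _ ≤ ∫⁻ t in Set.Iic x, h t ∂μ :=
        setLIntegral_mono hmeas (fun t ht => hanti ht)
  have hBq : B ≤ h x * q := by
    rw [hB]
    calc ∫⁻ t in (Set.Iic x)ᶜ, h t ∂μ ≤ ∫⁻ _ in (Set.Iic x)ᶜ, h x ∂μ := by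
          refine setLIntegral_mono measurable_const (fun t ht => ?_)
          simp only [Set.mem_compl_iff, Set.mem_Iic, not_le] at ht
          exact hanti ht.le
      _ = h x * q := by rw [setLIntegral_const, hq]
  calc p * ∫⁻ t, h t ∂μ = p * A + p * B := by rw [htot, mul_add]
    _ ≤ p * A + p * (h x * q) := add_le_add le_rfl (mul_le_mul_right hBq p)
    _ = p * A + q * (h x * p) := by ring
    _ ≤ p * A + q * A := add_le_add le_rfl (mul_le_mul_right hAp q)
    _ = (p + q) * A := by ring
    _ = A := by rw [hpq, one_mul]

/-- The one-step conditional kernel stochastically dominates `μ` from below: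
its CDF is everywhere at least that of `μ`. -/
lemma mker_cdf_dom (b : ℕ → ℝ) (r : ℕ) (s : ℝ) (x : ℝ) :
    μ (Set.Iic x) ≤ mker μ b r s (Set.Iic x) := by
  unfold mker
  by_cases h : gg μ (r + 1) b s = 0
  · rw [if_pos h]
  · rw [if_neg h, Measure.smul_apply, smul_eq_mul, withDensity_apply _ measurableSet_Iic]
    set X := gg μ (r + 1) b s with hX
    have hcheb := chebyshev_antitone μ (dens_measurable μ b r s) (dens_antitone μ b r s)
      (dens_le_one μ b r s) x
    rw [← gg_succ, ← hX] at hcheb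
    calc μ (Set.Iic x) = μ (Set.Iic x) * (X⁻¹ * X) := by
          rw [ENNReal.inv_mul_cancel h (gg_ne_top μ (r+1) b s), mul_one]
      _ = X⁻¹ * (μ (Set.Iic x) * X) := by rw [mul_left_comm]
      _ ≤ X⁻¹ * ∫⁻ t in Set.Iic x, dens μ b r s t ∂μ := mul_le_mul_right hcheb _
  
lemma mker_meas_family (b : ℕ → ℝ) (r : ℕ) (x : ℝ) :
    Measurable fun s => mker μ b r s (Set.Iic x) := by
  unfold mker
  have : ∀ s : ℝ, (if gg μ (r + 1) b s = 0 then μ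
      else (gg μ (r + 1) b s)⁻¹ • μ.withDensity (dens μ b r s)) (Set.Iic x)
      = if gg μ (r + 1) b s = 0 then μ (Set.Iic x)
      else (gg μ (r + 1) b s)⁻¹ * ∫⁻ t in Set.Iic x, dens μ b r s t ∂μ := by
    intro s
    by_cases h : gg μ (r + 1) b s = 0
    · rw [if_pos h, if_pos h]
    · rw [if_neg h, if_neg h, Measure.smul_apply, smul_eq_mul,
        withDensity_apply _ measurableSet_Iic]
  simp only [this]
  refine Measurable.ite ((gg_measurable μ (r+1) b) (measurableSet_singleton 0))
    measurable_const ?_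
  refine Measurable.mul (Measurable.inv (gg_measurable μ (r+1) b)) ?_
  exact Measurable.lintegral_prod_right' (f := fun p : ℝ × ℝ => dens μ b r p.1 p.2)
    (ν := μ.restrict (Set.Iic x)) (dens_measurable_joint μ b r)

end GG

section Chain

open ENNReal

/-- Sum of the first `m` coordinates. -/
def sumlt {r : ℕ} (m : ℕ) (v : Fin r → ℝ) : ℝ :=
  ∑ i ∈ Finset.univ.filter (fun i : Fin r => (i : ℕ) < m), v i

lemma sumlt_zero {r : ℕ} (v : Fin r → ℝ) : sumlt 0 v = 0 := by
  simp [sumlt]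

lemma sumlt_cons {r : ℕ} (m : ℕ) (t : ℝ) (v : Fin r → ℝ) :
    sumlt (m + 1) (Fin.cons t v) = t + sumlt m v := by
  unfold sumlt
  rw [Finset.sum_filter, Finset.sum_filter, Fin.sum_univ_succ]
  simp [Fin.cons_zero, Fin.cons_succ, Nat.succ_lt_succ_iff]

/-- The constraint set: walk started at `s` stays below thresholds `b 0, b 1, …`. -/
def Drel (b : ℕ → ℝ) (r : ℕ) (s : ℝ) : Set (Fin r → ℝ) :=
  {v | ∀ m ∈ Finset.Icc 1 r, s + sumlt m v < b (m - 1)}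

lemma Drel_zero (b : ℕ → ℝ) (s : ℝ) : Drel b 0 s = Set.univ := by
  ext v; simp [Drel]

lemma measurableSet_Drel_joint (b : ℕ → ℝ) (r : ℕ) :
    MeasurableSet {p : ℝ × (Fin r → ℝ) | p.2 ∈ Drel b r p.1} := by
  have : {p : ℝ × (Fin r → ℝ) | p.2 ∈ Drel b r p.1}
      = ⋂ m ∈ Finset.Icc 1 r, {p : ℝ × (Fin r → ℝ) | p.1 + sumlt m p.2 < b (m - 1)} := by
    ext p; simp [Drel]
  rw [this]
  refine MeasurableSet.biInter (Finset.Icc 1 r).countable_toSet fun m _ => ?_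
  have hs : Measurable fun p : ℝ × (Fin r → ℝ) => p.1 + sumlt m p.2 := by
    refine measurable_fst.add ?_
    exact Finset.measurable_sum _ fun i _ => (measurable_pi_apply i).comp measurable_snd
  exact measurableSet_lt hs measurable_const

lemma measurableSet_Drel (b : ℕ → ℝ) (r : ℕ) (s : ℝ) : MeasurableSet (Drel b r s) := by
  have := (measurableSet_Drel_joint b r).preimage
    (measurable_prodMk_left : Measurable (Prod.mk s : (Fin r → ℝ) → ℝ × (Fin r → ℝ)))
  exact this

lemma cons_mem_Drel_iff (b : ℕ → ℝ) (r : ℕ) (s t : ℝ) (v : Fin r → ℝ) :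
    Fin.cons t v ∈ Drel b (r + 1) s
      ↔ t ∈ Set.Iio (b 0 - s) ∧ v ∈ Drel (fun n => b (n + 1)) r (s + t) := by
  constructor
  · intro h
    constructor
    · have h1 := h 1 (by simp)
      have hs1 : sumlt 1 (Fin.cons t v) = t := by
        have h0 := sumlt_cons 0 t v
        rw [sumlt_zero, add_zero] at h0
        exact h0
      rw [hs1] at h1
      simp only [Set.mem_Iio]
      have : b (1 - 1) = b 0 := rfl
      rw [this] at h1
      linarith
    · intro m hm
      simp only [Finset.mem_Icc] at hm
      have h2 := h (m + 1) (by simp only [Finset.mem_Icc]; omega)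
      rw [sumlt_cons] at h2
      have : m + 1 - 1 = m := by omega
      rw [this] at h2
      have : m - 1 + 1 = m := by omega
      rw [show (fun n => b (n + 1)) (m - 1) = b (m - 1 + 1) from rfl, this]
      linarith
  · rintro ⟨h1, h2⟩ m hm
    simp only [Finset.mem_Icc] at hm
    obtain ⟨hm1, hm2⟩ := hm
    obtain ⟨m', rfl⟩ : ∃ m', m = m' + 1 := ⟨m - 1, by omega⟩
    rw [sumlt_cons]
    rcases Nat.eq_zero_or_pos m' with hm' | hm'
    · subst hm'
      rw [sumlt_zero]
      simp only [Set.mem_Iio] at h1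
      simp
      linarith
    · have h3 := h2 m' (by simp only [Finset.mem_Icc]; omega)
      have : m' - 1 + 1 = m' := by omega
      rw [show (fun n => b (n + 1)) (m' - 1) = b (m' - 1 + 1) from rfl, this] at h3
      have : m' + 1 - 1 = m' := by omega
      rw [this]
      linarith

variable (μ : Measure ℝ) [IsProbabilityMeasure μ]

lemma pi_eq_prod_comp {r : ℕ} (ν : Measure ℝ) [IsProbabilityMeasure ν]
    {A : Set (Fin (r + 1) → ℝ)} (hA : MeasurableSet A) :
    (Measure.pi fun _ : Fin (r + 1) => ν) A
      = (ν.prod (Measure.pi fun _ : Fin r => ν))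
        ((MeasurableEquiv.piFinSuccAbove (fun _ : Fin (r + 1) => ℝ) 0).symm ⁻¹' A) := by
  set e := MeasurableEquiv.piFinSuccAbove (fun _ : Fin (r + 1) => ℝ) 0 with he
  have hmp := measurePreserving_piFinSuccAbove (fun _ : Fin (r + 1) => ν) 0
  have h1 : (Measure.pi fun _ : Fin (r + 1) => ν)
      = (ν.prod (Measure.pi fun _ : Fin r => ν)).map e.symm := (hmp.symm e).map_eq.symm
  rw [h1, Measure.map_apply e.symm.measurable hA]

lemma symm_piFinSuccAbove_apply {r : ℕ} (p : ℝ × (Fin r → ℝ)) :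
    (MeasurableEquiv.piFinSuccAbove (fun _ : Fin (r + 1) => ℝ) 0).symm p
      = Fin.cons p.1 p.2 := by
  rcases p with ⟨t, v⟩
  rw [MeasurableEquiv.piFinSuccAbove_symm_apply]
  exact Fin.insertNth_zero' t v

/-- `gg` is the `π`-measure of the constraint set. -/
lemma gg_eq_pi_Drel : ∀ (r : ℕ) (b : ℕ → ℝ) (s : ℝ),
    gg μ r b s = (Measure.pi fun _ : Fin r => μ) (Drel b r s) := by
  intro r
  induction r with
  | zero =>
    intro b s
    rw [Drel_zero]
    simp [gg]
  | succ r ih =>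
    intro b s
    rw [gg_succ, pi_eq_prod_comp μ (measurableSet_Drel b (r+1) s), Measure.prod_apply
      ((MeasurableEquiv.piFinSuccAbove (fun _ : Fin (r + 1) => ℝ) 0).symm.measurable
        (measurableSet_Drel b (r+1) s))]
    refine lintegral_congr fun t => ?_
    have hset : Prod.mk t ⁻¹'
        ((MeasurableEquiv.piFinSuccAbove (fun _ : Fin (r + 1) => ℝ) 0).symm ⁻¹' Drel b (r+1) s)
        = if t ∈ Set.Iio (b 0 - s) then Drel (fun n => b (n + 1)) r (s + t) else ∅ := by
      ext v
      simp only [Set.mem_preimage, symm_piFinSuccAbove_apply, cons_mem_Drel_iff]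
      by_cases ht : t ∈ Set.Iio (b 0 - s)
      · simp [ht]
      · simp [ht]
    rw [hset]
    unfold dens
    by_cases ht : t ∈ Set.Iio (b 0 - s)
    · rw [if_pos ht, Set.indicator_of_mem ht, ih]
    · rw [if_neg ht, Set.indicator_of_notMem ht, measure_empty]

variable (c : ℝ)

/-- The recursive quantile-transport chain. -/
def chain : ℕ → (ℕ → ℝ) → ℝ → (ℕ → ℝ) → ℕ → ℝ
  | 0, _, _, _, _ => 0
  | (r + 1), b, s, w, 0 => Qg c (mker μ b r s) (w 0)
  | (r + 1), b, s, w, (i + 1) =>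
      chain r (fun n => b (n + 1)) (s + Qg c (mker μ b r s) (w 0)) (fun n => w (n + 1)) i

variable {cp : ℝ} (hcd : c ≤ cp) (hsupp : μ (Set.Icc c cp) = 1)

include hcd hsupp in
/-- Coordinatewise domination of the chain by the plain `μ`-quantile. -/
lemma chain_le : ∀ (r : ℕ) (b : ℕ → ℝ) (s : ℝ) (w : ℕ → ℝ) (i : ℕ), i < r →
    chain μ c r b s w i ≤ Qg c μ (w i) := by
  intro r
  induction r with
  | zero => intro b s w i hi; omega
  | succ r ih =>
    intro b s w i hir
    cases i with
    | zero =>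
      rw [chain]
      exact qg_le_qg inferInstance hcd hsupp (mker_prob μ b r s) (mker_supp μ hsupp b r s)
        (fun x => mker_cdf_dom μ b r s x) (w 0)
    | succ i =>
      rw [chain]
      exact ih _ _ _ i (by omega)

include hcd hsupp in
lemma chain_measurable_joint : ∀ (r : ℕ) (b : ℕ → ℝ) (i : ℕ),
    Measurable fun p : ℝ × (ℕ → ℝ) => chain μ c r b p.1 p.2 i := by
  intro r
  induction r with
  | zero => intro b i; simp only [chain]; exact measurable_const
  | succ r ih =>
    intro b i
    have hq : Measurable fun p : ℝ × (ℕ → ℝ) => Qg c (mker μ b r p.1) (p.2 0) := by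
      have := qg_family_measurable (α := ℝ) hcd (mker μ b r) (fun s => mker_prob μ b r s)
        (fun s => mker_supp μ hsupp b r s) (fun x => mker_meas_family μ b r x)
      exact this.comp (measurable_fst.prodMk ((measurable_pi_apply 0).comp measurable_snd))
    match i with
    | 0 => exact hq
    | (i + 1) =>
      simp only [chain]
      have hmap : Measurable fun p : ℝ × (ℕ → ℝ) =>
          ((p.1 + Qg c (mker μ b r p.1) (p.2 0), fun n => p.2 (n + 1)) : ℝ × (ℕ → ℝ)) := by
        refine Measurable.prodMk (measurable_fst.add hq) ?_
        exact measurable_pi_lambda _ fun n => (measurable_pi_apply (n + 1)).comp measurable_snd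
      exact (ih (fun n => b (n + 1)) i).comp hmap

/-- Extension of a finite tuple by zeros. -/
def exd (r : ℕ) (u : Fin r → ℝ) : ℕ → ℝ := fun n => if h : n < r then u ⟨n, h⟩ else 0

lemma exd_cons_zero {r : ℕ} (t : ℝ) (v : Fin r → ℝ) : exd (r + 1) (Fin.cons t v) 0 = t := by
  simp [exd]

lemma exd_cons_shift {r : ℕ} (t : ℝ) (v : Fin r → ℝ) :
    (fun n => exd (r + 1) (Fin.cons t v) (n + 1)) = exd r v := by
  funext n
  unfold exd
  by_cases hn : n < r
  · rw [dif_pos (by omega : n + 1 < r + 1), dif_pos hn]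
    have hfin : (⟨n + 1, by omega⟩ : Fin (r + 1)) = Fin.succ ⟨n, hn⟩ := rfl
    rw [hfin, Fin.cons_succ]
  · rw [dif_neg (by omega : ¬ n + 1 < r + 1), dif_neg hn]

lemma exd_measurable (r : ℕ) : Measurable (exd r) := by
  refine measurable_pi_lambda _ fun n => ?_
  unfold exd
  by_cases hn : n < r
  · simp only [dif_pos hn]; exact measurable_pi_apply _
  · simp only [dif_neg hn]; exact measurable_const

/-- The full transport map. -/
def Phi (μ : Measure ℝ) (c : ℝ) (r : ℕ) (b : ℕ → ℝ) (s : ℝ) (u : Fin r → ℝ) : Fin r → ℝ :=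
  fun i => chain μ c r b s (exd r u) (i : ℕ)

include hcd hsupp in
lemma Phi_measurable (r : ℕ) (b : ℕ → ℝ) (s : ℝ) : Measurable (Phi μ c r b s) := by
  refine measurable_pi_lambda _ fun i => ?_
  have := chain_measurable_joint μ c hcd hsupp r b (i : ℕ)
  exact this.comp (measurable_const.prodMk (exd_measurable r))

open scoped Classical in
include hcd hsupp in
/-- Main theorem: the transport map pushes the uniform product measure onto the
conditioned product measure. -/
theorem map_Phi_eq : ∀ (r : ℕ) (b : ℕ → ℝ) (s : ℝ), gg μ r b s ≠ 0 →
    (Measure.pi fun _ : Fin r => nu0).map (Phi μ c r b s)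
      = (Measure.pi fun _ : Fin r => μ)[|Drel b r s] := by
  intro r
  induction r with
  | zero =>
    intro b s _
    rw [Drel_zero, ProbabilityTheory.cond_univ]
    haveI : IsProbabilityMeasure ((Measure.pi fun _ : Fin 0 => nu0).map (Phi μ c 0 b s)) :=
      Measure.isProbabilityMeasure_map (Phi_measurable μ c hcd hsupp 0 b s).aemeasurable
    refine Measure.ext fun A hA => ?_
    rcases A.eq_empty_or_nonempty with rfl | hne
    · simp
    · have hAu : A = Set.univ := by
        refine Set.eq_univ_iff_forall.mpr fun x => ?_
        obtain ⟨y, hy⟩ := hne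
        rwa [Subsingleton.elim x y]
      rw [hAu, measure_univ, measure_univ]
  | succ r ih =>
    intro b s hgg
    -- notation
    set b' : ℕ → ℝ := fun n => b (n + 1) with hb'
    set q0 : ℝ → ℝ := Qg c (mker μ b r s) with hq0
    have hq0m : Measurable q0 :=
      qg_measurable (mker_prob μ b r s) hcd (mker_supp μ hsupp b r s)
    have hq0law : nu0.map q0 = mker μ b r s :=
      map_qg (mker_prob μ b r s) hcd (mker_supp μ hsupp b r s)
    -- the split form of the transport map
    set Ψ : ℝ × (Fin r → ℝ) → (Fin (r + 1) → ℝ) :=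
      fun p => Fin.cons (q0 p.1) (Phi μ c r b' (s + q0 p.1) p.2) with hΨ
    have hΨm : Measurable Ψ := by
      refine measurable_pi_lambda _ fun i => ?_
      induction i using Fin.cases with
      | zero =>
        simp only [hΨ, Fin.cons_zero]
        exact hq0m.comp measurable_fst
      | succ i =>
        simp only [hΨ, Fin.cons_succ]
        have hmap : Measurable fun p : ℝ × (Fin r → ℝ) =>
            ((s + q0 p.1, exd r p.2) : ℝ × (ℕ → ℝ)) :=
          (measurable_const.add (hq0m.comp measurable_fst)).prodMk
            ((exd_measurable r).comp measurable_snd)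
        exact (chain_measurable_joint μ c hcd hsupp r b' (i : ℕ)).comp hmap
    -- rewrite the LHS as a map of the product measure
    have hsplit : (Measure.pi fun _ : Fin (r + 1) => nu0).map (Phi μ c (r + 1) b s)
        = (nu0.prod (Measure.pi fun _ : Fin r => nu0)).map Ψ := by
      have hmp := (measurePreserving_piFinSuccAbove (fun _ : Fin (r + 1) => nu0) 0).symm
        (MeasurableEquiv.piFinSuccAbove (fun _ : Fin (r + 1) => ℝ) 0)
      rw [← hmp.map_eq, Measure.map_map (Phi_measurable μ c hcd hsupp (r+1) b s)
        (MeasurableEquiv.piFinSuccAbove (fun _ : Fin (r + 1) => ℝ) 0).symm.measurable]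
      congr 1
      funext p
      simp only [Function.comp_apply, symm_piFinSuccAbove_apply]
      funext i
      induction i using Fin.cases with
      | zero =>
        simp only [hΨ, Fin.cons_zero]
        show chain μ c (r + 1) b s (exd (r + 1) (Fin.cons p.1 p.2)) 0 = q0 p.1
        rw [chain, exd_cons_zero]
      | succ i =>
        simp only [hΨ, Fin.cons_succ]
        show chain μ c (r + 1) b s (exd (r + 1) (Fin.cons p.1 p.2)) ((i : ℕ) + 1)
          = Phi μ c r b' (s + q0 p.1) p.2 i
        rw [chain, exd_cons_zero, exd_cons_shift]
        rfl
    haveI hLprob : IsProbabilityMeasure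
        ((Measure.pi fun _ : Fin (r + 1) => nu0).map (Phi μ c (r + 1) b s)) :=
      Measure.isProbabilityMeasure_map (Phi_measurable μ c hcd hsupp (r+1) b s).aemeasurable
    have hDne : (Measure.pi fun _ : Fin (r + 1) => μ) (Drel b (r + 1) s) ≠ 0 := by
      rw [← gg_eq_pi_Drel]; exact hgg
    haveI hRprob : IsProbabilityMeasure ((Measure.pi fun _ : Fin (r + 1) => μ)[|Drel b (r+1) s]) :=
      ProbabilityTheory.cond_isProbabilityMeasure hDne
    -- prove equality on boxes
    refine ext_of_generate_finite _ generateFrom_pi.symm isPiSystem_pi ?_ (by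
      rw [measure_univ, measure_univ])
    rintro S ⟨B, hB, rfl⟩
    have hBm : ∀ i, MeasurableSet (B i) := fun i => hB i (Set.mem_univ i)
    have hpiB : MeasurableSet (Set.pi Set.univ B) := MeasurableSet.univ_pi hBm
    set tb : Set (Fin r → ℝ) := Set.pi Set.univ (fun i : Fin r => B i.succ) with htbdef
    have htb : MeasurableSet tb := MeasurableSet.univ_pi fun i => hBm i.succ
    -- compute LHS
    rw [hsplit, Measure.map_apply hΨm hpiB, Measure.prod_apply (hΨm hpiB)]
    have hsec : ∀ t : ℝ, Prod.mk t ⁻¹' (Ψ ⁻¹' Set.pi Set.univ B)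
        = if q0 t ∈ B 0 then (Phi μ c r b' (s + q0 t)) ⁻¹' tb else ∅ := by
      intro t
      ext v
      simp only [Set.mem_preimage, hΨ, Set.mem_pi, Set.mem_univ, forall_true_left, htbdef]
      rw [Fin.forall_fin_succ]
      simp only [Fin.cons_zero, Fin.cons_succ]
      by_cases hq : q0 t ∈ B 0
      · simp [hq]
      · simp [hq]
    simp only [hsec]
    simp only [apply_ite (Measure.pi fun _ : Fin r => nu0), measure_empty]
    -- the inner conditional expression
    set Gfun : ℝ → ℝ≥0∞ := Set.indicator (B 0) (fun x =>
      (gg μ r b' (s + x))⁻¹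
        * (Measure.pi fun _ : Fin r => μ) (Drel b' r (s + x) ∩ tb)) with hGdef
    have hggm : Measurable fun x : ℝ => gg μ r b' (s + x) :=
      (gg_measurable μ r b').comp (measurable_const.add measurable_id)
    have hpim : Measurable fun x : ℝ =>
        (Measure.pi fun _ : Fin r => μ) (Drel b' r (s + x) ∩ tb) := by
      have hset : MeasurableSet {p : ℝ × (Fin r → ℝ) | p.2 ∈ Drel b' r (s + p.1) ∩ tb} := by
        have h1 : MeasurableSet {p : ℝ × (Fin r → ℝ) | p.2 ∈ Drel b' r (s + p.1)} := by
          have := (measurableSet_Drel_joint b' r).preimage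
            ((measurable_const.add measurable_fst).prodMk measurable_snd :
              Measurable fun p : ℝ × (Fin r → ℝ) => ((s + p.1, p.2) : ℝ × (Fin r → ℝ)))
          exact this
        exact h1.inter (measurable_snd htb)
      have := measurable_measure_prodMk_left (ν := (Measure.pi fun _ : Fin r => μ)) hset
      exact this
    have hGm : Measurable Gfun := (hggm.inv.mul hpim).indicator (hBm 0)
    -- a.e. identification of the integrand
    have hZm : MeasurableSet {x : ℝ | gg μ r b' (s + x) = 0} :=
      hggm (measurableSet_singleton 0)
    have hZker : mker μ b r s {x : ℝ | gg μ r b' (s + x) = 0} = 0 := by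
      rw [mker, if_neg hgg, Measure.smul_apply, smul_eq_mul, withDensity_apply _ hZm]
      have hz : ∀ x ∈ {x : ℝ | gg μ r b' (s + x) = 0}, dens μ b r s x = 0 := by
        intro x hx
        simp only [Set.mem_setOf_eq] at hx
        unfold dens
        by_cases hmem : x ∈ Set.Iio (b 0 - s)
        · rw [Set.indicator_of_mem hmem]; exact hx
        · rw [Set.indicator_of_notMem hmem]
      rw [setLIntegral_congr_fun hZm hz, lintegral_zero, mul_zero]
    have hae : ∀ᵐ t ∂nu0, gg μ r b' (s + q0 t) ≠ 0 := by
      have : nu0 (q0 ⁻¹' {x : ℝ | gg μ r b' (s + x) = 0}) = 0 := by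
        rw [← Measure.map_apply hq0m hZm, hq0law, hZker]
      refine (MeasureTheory.ae_iff (p := fun t => gg μ r b' (s + q0 t) ≠ 0)).mpr ?_
      simpa using this
    have hIH : ∀ᵐ t ∂nu0,
        (if q0 t ∈ B 0 then (Measure.pi fun _ : Fin r => nu0)
            ((Phi μ c r b' (s + q0 t)) ⁻¹' tb) else 0) = Gfun (q0 t) := by
      filter_upwards [hae] with t ht
      by_cases hq : q0 t ∈ B 0
      · rw [if_pos hq, hGdef, Set.indicator_of_mem hq]
        rw [← Measure.map_apply (Phi_measurable μ c hcd hsupp r b' (s + q0 t)) htb,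
          ih b' (s + q0 t) ht,
          ProbabilityTheory.cond_apply (measurableSet_Drel b' r (s + q0 t)),
          ← gg_eq_pi_Drel]
      · rw [if_neg hq, hGdef, Set.indicator_of_notMem hq]
    rw [lintegral_congr_ae hIH, ← lintegral_map hGm hq0m, hq0law, mker, if_neg hgg,
      lintegral_smul_measure,
      lintegral_withDensity_eq_lintegral_mul μ (dens_measurable μ b r s) hGm]
    -- compute RHS
    rw [ProbabilityTheory.cond_apply (measurableSet_Drel b (r+1) s), ← gg_eq_pi_Drel,
      pi_eq_prod_comp μ ((measurableSet_Drel b (r+1) s).inter hpiB),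
      Measure.prod_apply ((MeasurableEquiv.piFinSuccAbove (fun _ : Fin (r+1) => ℝ) 0).symm.measurable
        ((measurableSet_Drel b (r+1) s).inter hpiB))]
    congr 1
    refine lintegral_congr fun x => ?_
    -- pointwise identity of integrands
    have hsec2 : Prod.mk x ⁻¹'
        ((MeasurableEquiv.piFinSuccAbove (fun _ : Fin (r+1) => ℝ) 0).symm ⁻¹'
          (Drel b (r+1) s ∩ Set.pi Set.univ B))
        = if x ∈ Set.Iio (b 0 - s) ∧ x ∈ B 0 then Drel b' r (s + x) ∩ tb else ∅ := by
      ext v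
      simp only [Set.mem_preimage, symm_piFinSuccAbove_apply, Set.mem_inter_iff,
        cons_mem_Drel_iff, Set.mem_pi, Set.mem_univ, forall_true_left, htbdef]
      rw [Fin.forall_fin_succ]
      simp only [Fin.cons_zero, Fin.cons_succ]
      by_cases h1 : x ∈ Set.Iio (b 0 - s) <;> by_cases h2 : x ∈ B 0 <;>
        simp [h1, h2, Set.mem_pi] <;> tauto
    rw [hsec2]
    simp only [Pi.mul_apply]
    by_cases h1 : x ∈ Set.Iio (b 0 - s) <;> by_cases h2 : x ∈ B 0
    · rw [if_pos ⟨h1, h2⟩]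
      rw [hGdef, Set.indicator_of_mem h2]
      unfold dens
      rw [Set.indicator_of_mem h1]
      by_cases hz : gg μ r b' (s + x) = 0
      · rw [hz, zero_mul]
        have : (Measure.pi fun _ : Fin r => μ) (Drel b' r (s + x) ∩ tb) = 0 := by
          refine le_antisymm (le_trans (measure_mono Set.inter_subset_left) ?_) zero_le
          rw [← gg_eq_pi_Drel, hz]
        rw [this]
      · rw [← mul_assoc, ENNReal.mul_inv_cancel hz (gg_ne_top μ r b' (s + x)), one_mul]
    · rw [if_neg (by tauto), hGdef, Set.indicator_of_notMem h2, mul_zero]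
      exact measure_empty.symm
    · rw [if_neg (by tauto)]
      unfold dens
      rw [Set.indicator_of_notMem h1, zero_mul]
      exact measure_empty.symm
    · rw [if_neg (by tauto)]
      unfold dens
      rw [Set.indicator_of_notMem h1, zero_mul]
      exact measure_empty.symm

end Chain

lemma map_cond {α β : Type*} [MeasurableSpace α] [MeasurableSpace β] (P : Measure α)
    (f : α → β) (hf : Measurable f) (D : Set β) (hD : MeasurableSet D) :
    (ProbabilityTheory.cond P (f ⁻¹' D)).map f = ProbabilityTheory.cond (P.map f) D := by
  refine Measure.ext fun B hB => ?_
  rw [Measure.map_apply hf hB, ProbabilityTheory.cond_apply (hf hD),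
    ProbabilityTheory.cond_apply hD, Measure.map_apply hf hD,
    Measure.map_apply hf (hD.inter hB), Set.preimage_inter]

lemma multi_aux {Ω : Type} [MeasurableSpace Ω] (P : Measure Ω) [IsProbabilityMeasure P]
    (μ : Measure ℝ) [IsProbabilityMeasure μ] {c d : ℝ} (hcd : c ≤ d)
    (hsupp : μ (Set.Icc c d) = 1)
    (ξ : ℕ → Ω → ℝ) (hmeas : ∀ i, 1 ≤ i → Measurable (ξ i))
    (hlaw : ∀ i, 1 ≤ i → P.map (ξ i) = μ)
    (hindep : ProbabilityTheory.iIndepFun (m := fun _ : ℕ => (inferInstance : MeasurableSpace ℝ))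
      (fun i : ℕ => ξ (i + 1)) P)
    (j : ℕ) (S : Finset ℕ) (sets : ℕ → Set ℝ) (hsets : ∀ n ∈ S, MeasurableSet (sets n)) :
    ((Measure.pi fun _ : Fin j => nu0).prod P)
      (⋂ n ∈ S, (fun p : (Fin j → ℝ) × Ω =>
        if n + 1 ≤ j then Qg c μ (exd j p.1 n) else ξ (n + 1 - j) p.2) ⁻¹' sets n)
    = ∏ n ∈ S, μ (sets n) := by
  classical
  set A : Set (Fin j → ℝ) := Set.pi Set.univ
    (fun i : Fin j => if (i : ℕ) ∈ S then Qg c μ ⁻¹' sets (i : ℕ) else Set.univ) with hA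
  set T : Finset ℕ := (S.filter (fun n => ¬ n < j)).image (fun n => n - j) with hT
  set C : Set Ω := ⋂ m ∈ T, ξ (m + 1) ⁻¹' sets (m + j) with hC
  have hinter : (⋂ n ∈ S, (fun p : (Fin j → ℝ) × Ω =>
      if n + 1 ≤ j then Qg c μ (exd j p.1 n) else ξ (n + 1 - j) p.2) ⁻¹' sets n) = A ×ˢ C := by
    ext p
    rw [Set.mem_prod]
    constructor
    · intro hp
      have hp' : ∀ n ∈ S,
          (if n + 1 ≤ j then Qg c μ (exd j p.1 n) else ξ (n + 1 - j) p.2) ∈ sets n :=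
        fun n hn => Set.mem_iInter₂.mp hp n hn
      refine ⟨?_, ?_⟩
      · rw [hA]
        refine Set.mem_pi.mpr fun i _ => ?_
        by_cases hiS : (i : ℕ) ∈ S
        · rw [if_pos hiS]
          have h1 := hp' (i : ℕ) hiS
          rw [if_pos (by omega : (i : ℕ) + 1 ≤ j)] at h1
          have he : exd j p.1 (i : ℕ) = p.1 i := by
            unfold exd; rw [dif_pos i.isLt, Fin.eta]
          rw [he] at h1
          exact h1
        · rw [if_neg hiS]; trivial
      · rw [hC]
        refine Set.mem_iInter₂.mpr fun m hm => ?_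
        rw [hT] at hm
        simp only [Finset.mem_image, Finset.mem_filter] at hm
        obtain ⟨n, ⟨hnS, hnj⟩, rfl⟩ := hm
        have h1 := hp' n hnS
        rw [if_neg (by omega)] at h1
        have e1 : n - j + 1 = n + 1 - j := by omega
        have e2 : n - j + j = n := by omega
        rw [e1, e2]
        exact h1
    · rintro ⟨h1, h2⟩
      refine Set.mem_iInter₂.mpr fun n hn => ?_
      simp only [Set.mem_preimage]
      by_cases hnj : n + 1 ≤ j
      · rw [if_pos hnj]
        have h3 := Set.mem_pi.mp (hA ▸ h1) (⟨n, by omega⟩ : Fin j) (Set.mem_univ _)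
        rw [if_pos (by simpa using hn)] at h3
        have he : exd j p.1 n = p.1 ⟨n, by omega⟩ := by
          unfold exd; rw [dif_pos (by omega : n < j)]
        rw [he]
        simpa using h3
      · rw [if_neg hnj]
        have hm : n - j ∈ T := by
          rw [hT]; simp only [Finset.mem_image, Finset.mem_filter]
          exact ⟨n, ⟨hn, by omega⟩, rfl⟩
        have h3 := Set.mem_iInter₂.mp (hC ▸ h2) (n - j) hm
        simp only [Set.mem_preimage] at h3
        have e1 : n - j + 1 = n + 1 - j := by omega
        have e2 : n - j + j = n := by omega
        rw [e1, e2] at h3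
        exact h3
  rw [hinter, Measure.prod_prod]
  have hQm : Measurable (Qg c μ) := qg_measurable inferInstance hcd hsupp
  have hAval : (Measure.pi fun _ : Fin j => nu0) A
      = ∏ n ∈ S.filter (fun n => n < j), μ (sets n) := by
    rw [hA, Measure.pi_pi]
    have hfac : ∀ i : Fin j,
        nu0 (if (i : ℕ) ∈ S then Qg c μ ⁻¹' sets (i : ℕ) else Set.univ)
        = if (i : ℕ) ∈ S then μ (sets (i : ℕ)) else 1 := by
      intro i
      by_cases hiS : (i : ℕ) ∈ S
      · rw [if_pos hiS, if_pos hiS, ← Measure.map_apply hQm (hsets _ hiS),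
          map_qg inferInstance hcd hsupp]
      · rw [if_neg hiS, if_neg hiS, measure_univ]
    simp only [hfac]
    rw [← Finset.prod_filter]
    refine Finset.prod_bij' (fun (i : Fin j) _ => (i : ℕ))
      (fun n hn => (⟨n, by simp only [Finset.mem_filter] at hn; omega⟩ : Fin j))
      ?_ ?_ ?_ ?_ ?_
    · intro i hi
      simp only [Finset.mem_filter, Finset.mem_univ, true_and] at hi
      simp only [Finset.mem_filter]
      exact ⟨hi, i.isLt⟩
    · intro n hn
      simp only [Finset.mem_filter] at hn
      simp only [Finset.mem_filter, Finset.mem_univ, true_and]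
      exact hn.1
    · intro i hi
      exact Fin.eta i i.isLt
    · intro n hn
      rfl
    · intro i hi
      rfl
  have hCval : P C = ∏ n ∈ S.filter (fun n => ¬ n < j), μ (sets n) := by
    rw [hC]
    have hTmeas : ∀ m ∈ T, MeasurableSet (sets (m + j)) := by
      intro m hm
      rw [hT] at hm
      simp only [Finset.mem_image, Finset.mem_filter] at hm
      obtain ⟨n, ⟨hnS, hnj⟩, rfl⟩ := hm
      have e2 : n - j + j = n := by omega
      rw [e2]
      exact hsets n hnS
    rw [hindep.measure_inter_preimage_eq_mul T hTmeas, hT,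
      Finset.prod_image (by
        intro x hx y hy hxy
        simp only [Finset.coe_filter, Finset.mem_coe, Finset.mem_filter, Set.mem_setOf_eq] at hx hy
        simp only at hxy
        omega)]
    refine Finset.prod_congr rfl fun n hn => ?_
    simp only [Finset.mem_filter] at hn
    have e2 : n - j + j = n := by omega
    rw [e2, ← hlaw (n - j + 1) (by omega),
      Measure.map_apply (hmeas _ (by omega)) (hsets n hn.1)]
  rw [hAval, hCval, Finset.prod_filter_mul_prod_filter_not]

end SpacingsAux

theorem conditioned_spacings_dominated (Q : QueueParams) (Ω : Type) [MeasurableSpace Ω]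
    (P : Measure Ω) (hP : IsProbabilityMeasure P)
    (ξ : ℕ → Ω → ℝ) (hmeas : ∀ i, 1 ≤ i → Measurable (ξ i))
    (hlaw : ∀ i, 1 ≤ i → P.map (ξ i) = Q.μ)
    (hindep : ProbabilityTheory.iIndepFun (m := fun _ : ℕ => (inferInstance : MeasurableSpace ℝ))
      (fun i : ℕ => ξ (i + 1)) P)
    (j : ℕ) (hj : 1 ≤ j) (a : ℕ → ℝ)
    (hpos : 0 < P {ω | ∀ k ∈ Finset.Icc 1 j, (∑ i ∈ Finset.Icc 1 k, ξ i ω) < a k}) :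
    ∃ (Ω' : Type) (m' : MeasurableSpace Ω'),
      Nonempty (@DominationCoupling Q j
        ((ProbabilityTheory.cond P
            {ω | ∀ k ∈ Finset.Icc 1 j, (∑ i ∈ Finset.Icc 1 k, ξ i ω) < a k}).map
          (fun ω (i : Fin j) => ξ ((i : ℕ) + 1) ω)) Ω' m') := by
  classical
  haveI hQμ : IsProbabilityMeasure Q.μ := Q.μ_prob
  haveI hPi : IsProbabilityMeasure P := hP
  have hcd : Q.cm ≤ Q.cp := Q.cm_lt_cp.le
  have hsupp : Q.μ (Set.Icc Q.cm Q.cp) = 1 := Q.μ_supp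
  set E : Set Ω := {ω | ∀ k ∈ Finset.Icc 1 j, (∑ i ∈ Finset.Icc 1 k, ξ i ω) < a k} with hE
  set b : ℕ → ℝ := fun n => a (n + 1) with hb
  set ξvec : Ω → (Fin j → ℝ) := fun ω (i : Fin j) => ξ ((i : ℕ) + 1) ω with hξvec
  have hξvecm : Measurable ξvec :=
    measurable_pi_lambda _ fun i => hmeas ((i : ℕ) + 1) (by omega)
  have hsum : ∀ (m : ℕ), m ≤ j → ∀ ω,
      SpacingsAux.sumlt m (ξvec ω) = ∑ i ∈ Finset.Icc 1 m, ξ i ω := by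
    intro m hm ω
    unfold SpacingsAux.sumlt
    refine Finset.sum_bij' (fun (i : Fin j) _ => (i : ℕ) + 1)
      (fun n hn => (⟨n - 1, by simp only [Finset.mem_Icc] at hn; omega⟩ : Fin j)) ?_ ?_ ?_ ?_ ?_
    · intro i hi
      simp only [Finset.mem_filter, Finset.mem_univ, true_and] at hi
      simp only [Finset.mem_Icc]
      omega
    · intro n hn
      simp only [Finset.mem_Icc] at hn
      simp only [Finset.mem_filter, Finset.mem_univ, true_and]
      omega
    · intro i hi
      ext
      simp
    · intro n hn
      simp only [Finset.mem_Icc] at hn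
      simp only
      omega
    · intro i hi
      rfl
  have hbm : ∀ m : ℕ, 1 ≤ m → b (m - 1) = a m := by
    intro m hm
    rw [hb]
    simp only
    congr 1
    omega
  have hEeq : E = ξvec ⁻¹' (SpacingsAux.Drel b j 0) := by
    ext ω
    simp only [hE, Set.mem_setOf_eq, Set.mem_preimage, SpacingsAux.Drel]
    constructor
    · intro h m hm
      rw [Finset.mem_Icc] at hm
      rw [zero_add, hsum m hm.2 ω, hbm m hm.1]
      exact h m (Finset.mem_Icc.mpr hm)
    · intro h k hk
      rw [Finset.mem_Icc] at hk
      have h2 := h k (Finset.mem_Icc.mpr hk)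
      rw [zero_add, hsum k hk.2 ω, hbm k hk.1] at h2
      exact h2
  have hDmeas := SpacingsAux.measurableSet_Drel b j 0
  have hjoint : P.map ξvec = Measure.pi (fun _ : Fin j => Q.μ) := by
    refine (Measure.pi_eq fun s hs => ?_).symm
    rw [Measure.map_apply hξvecm (MeasurableSet.univ_pi hs)]
    set s' : ℕ → Set ℝ := fun n => if h : n < j then s ⟨n, h⟩ else Set.univ with hs'
    have hpre : ξvec ⁻¹' Set.pi Set.univ s = ⋂ n ∈ Finset.range j, ξ (n + 1) ⁻¹' s' n := by
      ext ω
      simp only [Set.mem_preimage, Set.mem_pi, Set.mem_univ, forall_true_left, Set.mem_iInter,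
        Finset.mem_range]
      constructor
      · intro h n hn
        simp only [hs', dif_pos hn]
        exact h ⟨n, hn⟩
      · intro h i
        have h2 := h (i : ℕ) i.isLt
        simpa only [hs', dif_pos i.isLt, Fin.eta] using h2
    rw [hpre]
    refine Eq.trans (hindep.measure_inter_preimage_eq_mul (Finset.range j) (fun n hn => by
      simp only [hs', dif_pos (Finset.mem_range.mp hn)]; exact hs _)) ?_
    rw [← Fin.prod_univ_eq_prod_range (fun n => P (ξ (n + 1) ⁻¹' s' n)) j]
    refine Finset.prod_congr rfl fun i _ => ?_
    have hseq : s' (i : ℕ) = s i := by simp only [hs', dif_pos i.isLt, Fin.eta]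
    rw [hseq, ← hlaw ((i : ℕ) + 1) (by omega), Measure.map_apply (hmeas _ (by omega)) (hs i)]
  have hπD : (Measure.pi fun _ : Fin j => Q.μ) (SpacingsAux.Drel b j 0) = P E := by
    rw [← hjoint, Measure.map_apply hξvecm hDmeas, ← hEeq]
  have hggne : SpacingsAux.gg Q.μ j b 0 ≠ 0 := by
    rw [SpacingsAux.gg_eq_pi_Drel, hπD]
    exact hpos.ne'
  have hν : (ProbabilityTheory.cond P E).map ξvec
      = ProbabilityTheory.cond (Measure.pi fun _ : Fin j => Q.μ) (SpacingsAux.Drel b j 0) := by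
    rw [hEeq, SpacingsAux.map_cond P ξvec hξvecm _ hDmeas, hjoint]
  -- construct the coupling
  refine ⟨(Fin j → ℝ) × Ω, inferInstance, ⟨?_⟩⟩
  set P' : Measure ((Fin j → ℝ) × Ω) :=
    (Measure.pi fun _ : Fin j => SpacingsAux.nu0).prod P with hP'
  set xihatF : ℕ → (Fin j → ℝ) × Ω → ℝ :=
    fun i p => SpacingsAux.chain Q.μ Q.cm j b 0 (SpacingsAux.exd j p.1) (i - 1) with hxihatF
  set zetaF : ℕ → (Fin j → ℝ) × Ω → ℝ :=
    fun i p => if i ≤ j then SpacingsAux.Qg Q.cm Q.μ (SpacingsAux.exd j p.1 (i - 1))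
      else ξ (i - j) p.2 with hzetaF
  have hQgm : Measurable (SpacingsAux.Qg Q.cm Q.μ) := SpacingsAux.qg_measurable hQμ hcd hsupp
  have hxm : ∀ i, Measurable (xihatF i) := by
    intro i
    exact (SpacingsAux.chain_measurable_joint Q.μ Q.cm hcd hsupp j b (i - 1)).comp
      (measurable_const.prodMk ((SpacingsAux.exd_measurable j).comp measurable_fst))
  have hzm : ∀ i, Measurable (zetaF i) := by
    intro i
    rw [hzetaF]
    by_cases hij : i ≤ j
    · simp only [if_pos hij]
      exact hQgm.comp ((measurable_pi_apply (i - 1)).comp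
        ((SpacingsAux.exd_measurable j).comp measurable_fst))
    · simp only [if_neg hij]
      exact (hmeas (i - j) (by omega)).comp measurable_snd
  have hsingle : ∀ n (B : Set ℝ), MeasurableSet B →
      P' (zetaF (n + 1) ⁻¹' B) = Q.μ B := by
    intro n B hB
    have h1 := SpacingsAux.multi_aux P Q.μ hcd hsupp ξ hmeas hlaw hindep j {n} (fun _ => B)
      (fun _ _ => hB)
    rw [Finset.prod_singleton] at h1
    rw [← h1]
    congr 1
    rw [Finset.set_biInter_singleton]
    rfl
  refine
    { P' := P'
      P'_prob := by infer_instance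
      xihat := xihatF
      zeta := zetaF
      xihat_meas := hxm
      zeta_meas := hzm
      xihat_law := ?_
      zeta_indep := ?_
      zeta_law := ?_
      dominated := ?_ }
  · -- xihat_law
    have hfun : (fun p : (Fin j → ℝ) × Ω => fun i : Fin j => xihatF ((i : ℕ) + 1) p)
        = (SpacingsAux.Phi Q.μ Q.cm j b 0) ∘ Prod.fst := by
      funext p
      rfl
    rw [hfun, ← Measure.map_map (SpacingsAux.Phi_measurable Q.μ Q.cm hcd hsupp j b 0)
      measurable_fst]
    rw [hP', Measure.map_fst_prod, measure_univ, one_smul,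
      SpacingsAux.map_Phi_eq Q.μ Q.cm hcd hsupp j b 0 hggne]
    exact hν.symm
  · -- zeta_indep
    rw [ProbabilityTheory.iIndepFun_iff_measure_inter_preimage_eq_mul]
    intro S sets hsets
    calc P' (⋂ i ∈ S, (fun i : ℕ => zetaF (i + 1)) i ⁻¹' sets i)
        = ∏ n ∈ S, Q.μ (sets n) :=
          SpacingsAux.multi_aux P Q.μ hcd hsupp ξ hmeas hlaw hindep j S sets hsets
      _ = ∏ n ∈ S, P' ((fun i : ℕ => zetaF (i + 1)) n ⁻¹' sets n) :=
          Finset.prod_congr rfl fun n hn => (hsingle n (sets n) (hsets n hn)).symm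
  · -- zeta_law
    intro i hi
    obtain ⟨n, rfl⟩ : ∃ n, i = n + 1 := ⟨i - 1, by omega⟩
    refine Measure.ext fun B hB => ?_
    rw [Measure.map_apply (hzm (n + 1)) hB, hsingle n B hB]
  · -- dominated
    refine Filter.Eventually.of_forall fun p i hi => ?_
    rw [Finset.mem_Icc] at hi
    have h1 := SpacingsAux.chain_le Q.μ Q.cm hcd hsupp j b 0 (SpacingsAux.exd j p.1) (i - 1)
      (by omega)
    have h2 : zetaF i p = SpacingsAux.Qg Q.cm Q.μ (SpacingsAux.exd j p.1 (i - 1)) := by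
      rw [hzetaF]
      simp only [if_pos hi.2]
    rw [h2]
    exact h1
end
end

section
/- For the spatial queue process started from any initial configuration, and for all integers t_0 ≥ 1 and s ≥ t_0, the following event inclusion holds: A_{s+1}(t_0)^c ⊆ { M(t_0) ≤ s } ∪ ⋃_{ℓ=0}^{t_0−1} { W(t_0 − ℓ) = s − t_0 + ℓ + 1 }. Consequently P( A_{s+1}(t_0)^c ) ≤ P( M(t_0) ≤ s ) + Σ_{ℓ=0}^{t_0−1} P( W(t_0 − ℓ) = s − t_0 + ℓ + 1 ). -/
open MeasureTheory ProbabilityTheory Filter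

noncomputable section

section Aux

variable {Q : QueueParams} {Ω : Type} [MeasurableSpace Ω]

lemma aux_x0_pos (qp : QueueProcess Q Ω) : ∀ i, 1 ≤ i → Q.cm ≤ qp.x0 i := by
  intro i hi
  induction i with
  | zero => omega
  | succ n ih =>
    have h := (qp.x0_config.2 n).1
    rcases Nat.eq_zero_or_pos n with h0 | h0
    · subst h0
      have h1 := qp.x0_config.1
      linarith
    · have h2 := ih h0
      have := Q.cm_pos
      linarith

lemma aux_X_pos (qp : QueueProcess Q Ω) : ∀ t i (ω : Ω), 1 ≤ i → Q.cm ≤ qp.X i t ω := by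
  intro t
  induction t with
  | zero => intro i ω hi; rw [qp.X_init]; exact aux_x0_pos qp i hi
  | succ n ih =>
    intro i ω hi
    by_cases H : ∀ k ∈ Finset.Icc 1 i,
        (∑ m ∈ Finset.Icc 1 k, qp.ξ m (n + 1) ω) < qp.X (k + 1) ((n + 1) - 1) ω - Q.cp
    · rw [qp.X_move (n + 1) ω i (by omega) hi H]
      have h1 : Q.cm ≤ qp.ξ 1 (n + 1) ω := (qp.ξ_range 1 (n + 1) ω le_rfl (by omega)).1
      refine h1.trans (Finset.single_le_sum (f := fun m => qp.ξ m (n + 1) ω) ?_ ?_)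
      · intro m hm
        have := (qp.ξ_range m (n + 1) ω (Finset.mem_Icc.mp hm).1 (by omega)).1
        linarith [Q.cm_pos]
      · exact Finset.mem_Icc.mpr ⟨le_rfl, hi⟩
    · rw [qp.X_stay (n + 1) ω i (by omega) hi H]
      simpa using ih (i + 1) ω (by omega)

lemma aux_Xstar_step (qp : QueueProcess Q Ω) (s t : ℕ) (ω : Ω) (ht1 : 1 ≤ t) (hts : t ≤ s) :
    qp.Xstar s t ω ≤ qp.Xstar s (t - 1) ω := by
  show qp.X (s - t) t ω ≤ qp.X (s - (t - 1)) (t - 1) ω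
  have hidx : s - (t - 1) = (s - t) + 1 := by omega
  rw [hidx]
  rcases Nat.eq_zero_or_pos (s - t) with h0 | h0
  · rw [h0, qp.X_zero]
    have := aux_X_pos qp (t - 1) (0 + 1) ω (by omega)
    linarith [Q.cm_pos]
  · by_cases H : ∀ k ∈ Finset.Icc 1 (s - t),
        (∑ m ∈ Finset.Icc 1 k, qp.ξ m t ω) < qp.X (k + 1) (t - 1) ω - Q.cp
    · rw [qp.X_move t ω (s - t) ht1 h0 H]
      have := H (s - t) (Finset.mem_Icc.mpr ⟨h0, le_rfl⟩)
      have hcp : 0 < Q.cp := Q.cm_pos.trans Q.cm_lt_cp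
      linarith
    · rw [qp.X_stay t ω (s - t) ht1 h0 H]

lemma aux_Xstar_mono (qp : QueueProcess Q Ω) (s : ℕ) (ω : Ω) :
    ∀ v u, u ≤ v → v ≤ s → qp.Xstar s v ω ≤ qp.Xstar s u ω := by
  intro v
  induction v with
  | zero => intro u hu _; interval_cases u; rfl
  | succ n ih =>
    intro u hu hvs
    rcases Nat.lt_or_ge u (n + 1) with h | h
    · have h1 : qp.Xstar s (n + 1) ω ≤ qp.Xstar s n ω := by
        have := aux_Xstar_step qp s (n + 1) ω (by omega) hvs
        simpa using this
      exact h1.trans (ih u (by omega) (by omega))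
    · have : u = n + 1 := by omega
      rw [this]

lemma aux_W_pos (qp : QueueProcess Q Ω) (t : ℕ) (ω : Ω) : (0 : ℕ∞) < qp.W t ω := by
  refine lt_of_lt_of_le (by norm_num : (0 : ℕ∞) < 1) ?_
  refine le_iInf₂ fun n hn => ?_
  exact_mod_cast hn.1

lemma aux_W_gt_of_move (qp : QueueProcess Q Ω) (s t : ℕ) (ω : Ω) (ht1 : 1 ≤ t) (hts : t ≤ s)
    (h : qp.Xstar s t ω ≠ qp.Xstar s (t - 1) ω) :
    ((s - t : ℕ) : ℕ∞) < qp.W t ω := by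
  rcases Nat.eq_zero_or_pos (s - t) with h0 | h0
  · rw [h0]
    exact_mod_cast aux_W_pos qp t ω
  · have H : ∀ k ∈ Finset.Icc 1 (s - t),
        (∑ m ∈ Finset.Icc 1 k, qp.ξ m t ω) < qp.X (k + 1) (t - 1) ω - Q.cp := by
      by_contra H
      refine h ?_
      show qp.X (s - t) t ω = qp.X (s - (t - 1)) (t - 1) ω
      rw [qp.X_stay t ω (s - t) ht1 h0 H]
      congr 1
      omega
    have hle : ((s - t + 1 : ℕ) : ℕ∞) ≤ qp.W t ω := by
      refine le_iInf₂ fun n hn => ?_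
      by_contra hc
      push_neg at hc
      have hni : n ≤ s - t := by
        have : n < s - t + 1 := by exact_mod_cast hc
        omega
      exact absurd hn.2 (not_le.mpr (H n (Finset.mem_Icc.mpr ⟨hn.1, hni⟩)))
    refine lt_of_lt_of_le ?_ hle
    exact_mod_cast Nat.lt_succ_self (s - t)

lemma aux_W_le_of_stay (qp : QueueProcess Q Ω) (s t : ℕ) (ω : Ω) (ht1 : 1 ≤ t)
    (h1 : 1 ≤ s - t) (h : qp.Xstar s t ω = qp.Xstar s (t - 1) ω) :
    qp.W t ω ≤ ((s - t : ℕ) : ℕ∞) := by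
  by_contra hc
  push_neg at hc
  have H : ∀ k ∈ Finset.Icc 1 (s - t),
      (∑ m ∈ Finset.Icc 1 k, qp.ξ m t ω) < qp.X (k + 1) (t - 1) ω - Q.cp := by
    intro k hk
    by_contra hk2
    push_neg at hk2
    have hWk : qp.W t ω ≤ (k : ℕ∞) :=
      iInf₂_le k ⟨(Finset.mem_Icc.mp hk).1, hk2⟩
    have hki : (k : ℕ∞) ≤ ((s - t : ℕ) : ℕ∞) := by
      exact_mod_cast (Finset.mem_Icc.mp hk).2
    exact absurd (hWk.trans hki) (not_le.mpr hc)
  have hmove := qp.X_move t ω (s - t) ht1 h1 H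
  have hlast := H (s - t) (Finset.mem_Icc.mpr ⟨h1, le_rfl⟩)
  have heq : qp.X (s - t) t ω = qp.X (s - t + 1) (t - 1) ω := by
    have e : s - (t - 1) = s - t + 1 := by omega
    have h' : qp.X (s - t) t ω = qp.X (s - (t - 1)) (t - 1) ω := h
    rwa [e] at h'
  have hcp : 0 < Q.cp := Q.cm_pos.trans Q.cm_lt_cp
  rw [hmove] at heq
  linarith

lemma aux_Lmove_mem (qp : QueueProcess Q Ω) (s t0 : ℕ) (ω : Ω) :
    qp.Lmove s t0 ω ≤ t0 ∧ qp.Xstar s t0 ω = qp.Xstar s (t0 - qp.Lmove s t0 ω) ω := by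
  have hne : {ℓ : ℕ | ℓ ≤ t0 ∧ qp.Xstar s t0 ω = qp.Xstar s (t0 - ℓ) ω}.Nonempty :=
    ⟨0, by simp⟩
  have hbdd : BddAbove {ℓ : ℕ | ℓ ≤ t0 ∧ qp.Xstar s t0 ω = qp.Xstar s (t0 - ℓ) ω} :=
    ⟨t0, fun x hx => hx.1⟩
  exact Nat.sSup_mem hne hbdd

lemma aux_Lmove_not_mem (qp : QueueProcess Q Ω) (s t0 : ℕ) (ω : Ω)
    (hlt : qp.Lmove s t0 ω < t0) :
    qp.Xstar s t0 ω ≠ qp.Xstar s (t0 - (qp.Lmove s t0 ω + 1)) ω := by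
  intro he
  have hbdd : BddAbove {ℓ : ℕ | ℓ ≤ t0 ∧ qp.Xstar s t0 ω = qp.Xstar s (t0 - ℓ) ω} :=
    ⟨t0, fun x hx => hx.1⟩
  have : qp.Lmove s t0 ω + 1 ≤ qp.Lmove s t0 ω :=
    le_csSup hbdd ⟨by omega, he⟩
  omega

end Aux

theorem blockEvent_compl_subset (Q : QueueParams) {Ω : Type} [MeasurableSpace Ω]
    (qp : QueueProcess Q Ω) (t0 s : ℕ) (ht0 : 1 ≤ t0) (hs : t0 ≤ s) :
    (qp.blockEvent s t0)ᶜ ⊆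
      ({ω | qp.Mfirst t0 ω ≤ (s : ℕ∞)} ∪
        ⋃ ℓ ∈ Finset.range t0, {ω | qp.W (t0 - ℓ) ω = ((s - t0 + ℓ + 1 : ℕ) : ℕ∞)}) ∧
    (qp.P (qp.blockEvent s t0)ᶜ).toReal
      ≤ (qp.P {ω | qp.Mfirst t0 ω ≤ (s : ℕ∞)}).toReal
        + ∑ ℓ ∈ Finset.range t0,
            (qp.P {ω | qp.W (t0 - ℓ) ω = ((s - t0 + ℓ + 1 : ℕ) : ℕ∞)}).toReal := by
  haveI := qp.P_prob
  have hsub : (qp.blockEvent s t0)ᶜ ⊆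
      ({ω | qp.Mfirst t0 ω ≤ (s : ℕ∞)} ∪
        ⋃ ℓ ∈ Finset.range t0, {ω | qp.W (t0 - ℓ) ω = ((s - t0 + ℓ + 1 : ℕ) : ℕ∞)}) := by
    intro ω hω
    by_cases hM : qp.Xstar s t0 ω = qp.Xstar s 0 ω
    · left
      show qp.Mfirst t0 ω ≤ (s : ℕ∞)
      exact iInf₂_le s ⟨hs, hM⟩
    · -- L_s < t0
      obtain ⟨hL1le, hL1eq⟩ := aux_Lmove_mem qp s t0 ω
      obtain ⟨hL2le, hL2eq⟩ := aux_Lmove_mem qp (s + 1) t0 ω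
      set ℓ1 := qp.Lmove s t0 ω with hl1def
      set ℓ2 := qp.Lmove (s + 1) t0 ω with hl2def
      have hLs_lt : ℓ1 < t0 := by
        rcases lt_or_eq_of_le hL1le with h | h
        · exact h
        · exfalso
          rw [h] at hL1eq
          simp only [Nat.sub_self] at hL1eq
          exact hM hL1eq
      have hne : ℓ1 ≠ ℓ2 := by
        rcases not_and_or.mp hω with h | h
        · exact h
        · exact absurd hLs_lt h
      rcases Nat.lt_or_ge ℓ1 ℓ2 with hcase | hcase
      · -- main case : individual s moved at t = t0 - ℓ1, s+1 did not
        right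
        set t := t0 - ℓ1 with htdef
        have ht1 : 1 ≤ t := by omega
        have hts : t ≤ s := by omega
        have hmove_s : qp.Xstar s t ω ≠ qp.Xstar s (t - 1) ω := by
          intro he
          refine aux_Lmove_not_mem qp s t0 ω hLs_lt ?_
          have e : t0 - (ℓ1 + 1) = t - 1 := by omega
          rw [e, ← he]
          exact hL1eq
        have hW1 : ((s - t : ℕ) : ℕ∞) < qp.W t ω :=
          aux_W_gt_of_move qp s t ω ht1 hts hmove_s
        have hstay : qp.Xstar (s + 1) t ω = qp.Xstar (s + 1) (t - 1) ω := by
          have hmono1 : qp.Xstar (s + 1) t0 ω ≤ qp.Xstar (s + 1) t ω :=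
            aux_Xstar_mono qp (s + 1) ω t0 t (by omega) (by omega)
          have hmono2 : qp.Xstar (s + 1) t ω ≤ qp.Xstar (s + 1) (t - 1) ω :=
            aux_Xstar_mono qp (s + 1) ω t (t - 1) (by omega) (by omega)
          have hmono3 : qp.Xstar (s + 1) (t - 1) ω ≤ qp.Xstar (s + 1) (t0 - ℓ2) ω :=
            aux_Xstar_mono qp (s + 1) ω (t - 1) (t0 - ℓ2) (by omega) (by omega)
          rw [← hL2eq] at hmono3
          linarith
        have hW2 : qp.W t ω ≤ ((s + 1 - t : ℕ) : ℕ∞) :=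
          aux_W_le_of_stay qp (s + 1) t ω ht1 (by omega) hstay
        have hWeq : qp.W t ω = ((s + 1 - t : ℕ) : ℕ∞) := by
          refine le_antisymm hW2 ?_
          have e : (s + 1 - t : ℕ) = (s - t) + 1 := by omega
          rw [e]
          push_cast
          exact Order.add_one_le_of_lt hW1
        simp only [Set.mem_iUnion, Finset.mem_range, Set.mem_setOf_eq]
        refine ⟨ℓ1, hLs_lt, ?_⟩
        have e2 : s + 1 - t = s - t0 + ℓ1 + 1 := by omega
        rw [← e2]
        exact hWeq
      · -- impossible case : ℓ2 < ℓ1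
        exfalso
        have hcase' : ℓ2 < ℓ1 := by omega
        set t := t0 - ℓ2 with htdef
        have ht1 : 1 ≤ t := by omega
        have hL2lt : ℓ2 < t0 := by omega
        have hmove_s1 : qp.Xstar (s + 1) t ω ≠ qp.Xstar (s + 1) (t - 1) ω := by
          intro he
          refine aux_Lmove_not_mem qp (s + 1) t0 ω (by omega) ?_
          have e : t0 - (ℓ2 + 1) = t - 1 := by omega
          rw [e, ← he]
          exact hL2eq
        have hW1 : ((s + 1 - t : ℕ) : ℕ∞) < qp.W t ω :=
          aux_W_gt_of_move qp (s + 1) t ω ht1 (by omega) hmove_s1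
        have hstay_s : qp.Xstar s t ω = qp.Xstar s (t - 1) ω := by
          have hmono1 : qp.Xstar s t0 ω ≤ qp.Xstar s t ω :=
            aux_Xstar_mono qp s ω t0 t (by omega) (by omega)
          have hmono2 : qp.Xstar s t ω ≤ qp.Xstar s (t - 1) ω :=
            aux_Xstar_mono qp s ω t (t - 1) (by omega) (by omega)
          have hmono3 : qp.Xstar s (t - 1) ω ≤ qp.Xstar s (t0 - ℓ1) ω :=
            aux_Xstar_mono qp s ω (t - 1) (t0 - ℓ1) (by omega) (by omega)
          rw [← hL1eq] at hmono3
          linarith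
        rcases Nat.eq_zero_or_pos (s - t) with h0 | h0
        · -- then s = t = t0, Xstar s t = 0 but Xstar s (t-1) ≥ cm
          have hst : s = t := by omega
          have h1 : qp.Xstar s t ω = 0 := by
            show qp.X (s - t) t ω = 0
            rw [h0, qp.X_zero]
          have h2 : Q.cm ≤ qp.Xstar s (t - 1) ω := by
            show Q.cm ≤ qp.X (s - (t - 1)) (t - 1) ω
            exact aux_X_pos qp (t - 1) (s - (t - 1)) ω (by omega)
          rw [← hstay_s, h1] at h2
          linarith [Q.cm_pos]
        · have hW2 : qp.W t ω ≤ ((s - t : ℕ) : ℕ∞) :=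
            aux_W_le_of_stay qp s t ω ht1 h0 hstay_s
          have : ((s - t : ℕ) : ℕ∞) < ((s + 1 - t : ℕ) : ℕ∞) := by
            exact_mod_cast (by omega : s - t < s + 1 - t)
          exact absurd (hW2.trans_lt (this.trans hW1)) (lt_irrefl _)
  refine ⟨hsub, ?_⟩
  have h1 : qp.P (qp.blockEvent s t0)ᶜ ≤
      qp.P {ω | qp.Mfirst t0 ω ≤ (s : ℕ∞)}
        + ∑ ℓ ∈ Finset.range t0, qp.P {ω | qp.W (t0 - ℓ) ω = ((s - t0 + ℓ + 1 : ℕ) : ℕ∞)} :=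
    calc qp.P (qp.blockEvent s t0)ᶜ
        ≤ qp.P ({ω | qp.Mfirst t0 ω ≤ (s : ℕ∞)} ∪
            ⋃ ℓ ∈ Finset.range t0, {ω | qp.W (t0 - ℓ) ω = ((s - t0 + ℓ + 1 : ℕ) : ℕ∞)}) :=
          measure_mono hsub
      _ ≤ qp.P {ω | qp.Mfirst t0 ω ≤ (s : ℕ∞)}
            + qp.P (⋃ ℓ ∈ Finset.range t0,
                {ω | qp.W (t0 - ℓ) ω = ((s - t0 + ℓ + 1 : ℕ) : ℕ∞)}) := measure_union_le _ _
      _ ≤ _ := add_le_add_right (measure_biUnion_finset_le _ _) _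
  have hne1 : qp.P {ω | qp.Mfirst t0 ω ≤ (s : ℕ∞)} ≠ ⊤ := measure_ne_top _ _
  have hne2 : (∑ ℓ ∈ Finset.range t0,
      qp.P {ω | qp.W (t0 - ℓ) ω = ((s - t0 + ℓ + 1 : ℕ) : ℕ∞)}) ≠ ⊤ :=
    ENNReal.sum_ne_top.mpr fun _ _ => measure_ne_top _ _
  calc (qp.P (qp.blockEvent s t0)ᶜ).toReal
      ≤ (qp.P {ω | qp.Mfirst t0 ω ≤ (s : ℕ∞)}
          + ∑ ℓ ∈ Finset.range t0,
              qp.P {ω | qp.W (t0 - ℓ) ω = ((s - t0 + ℓ + 1 : ℕ) : ℕ∞)}).toReal :=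
        ENNReal.toReal_mono (ENNReal.add_ne_top.mpr ⟨hne1, hne2⟩) h1
    _ = _ := by
        rw [ENNReal.toReal_add hne1 hne2, ENNReal.toReal_sum fun _ _ => measure_ne_top _ _]
end
end

section
/- For the spatial queue process started from any initial configuration, define the centered counting function F_t(x) = max{k ≥ 0 : X_k(t) ≤ x} − x and G(t, x) = t + F_t(x) for x ≥ 0. Then for every t ≥ 1 and every real x ≥ X_{W(t)}(t): G(t, x) = G(t−1, x). (The graphs of consecutive functions G(t−1, ·) and G(t, ·) coalesce from the position of the first unmoved customer onward.) -/
open MeasureTheory ProbabilityTheory Filter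

noncomputable section

section Aux

variable {Q : QueueParams} {Ω : Type} [MeasurableSpace Ω]

/-- At every time, successive customers are at least `cm` apart. -/
lemma queue_spacing (qp : QueueProcess Q Ω) (ω : Ω) :
    ∀ u i, qp.X i u ω + Q.cm ≤ qp.X (i + 1) u ω := by
  intro u
  induction u with
  | zero =>
    intro i
    rw [qp.X_init, qp.X_init]
    have h := (qp.x0_config.2 i).1
    linarith
  | succ v ih =>
    have hξcm : ∀ m, 1 ≤ m → Q.cm ≤ qp.ξ m (v + 1) ω :=
      fun m hm => (qp.ξ_range m (v + 1) ω hm (Nat.le_add_left 1 v)).1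
    intro i
    match i with
    | 0 =>
      rw [qp.X_zero]
      by_cases h1 : ∀ k ∈ Finset.Icc 1 1, (∑ m ∈ Finset.Icc 1 k, qp.ξ m (v + 1) ω) <
          qp.X (k + 1) (v + 1 - 1) ω - Q.cp
      · rw [qp.X_move (v + 1) ω 1 (Nat.le_add_left 1 v) le_rfl h1]
        simpa using hξcm 1 le_rfl
      · rw [qp.X_stay (v + 1) ω 1 (Nat.le_add_left 1 v) le_rfl h1]
        simp only [Nat.add_sub_cancel]
        have h3 : Q.cm ≤ qp.X 1 v ω := by
          have := ih 0
          rw [qp.X_zero] at this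
          simpa using this
        have h2 : qp.X 1 v ω + Q.cm ≤ qp.X 2 v ω := ih 1
        have : qp.X (1 + 1) v ω = qp.X 2 v ω := rfl
        rw [this]
        linarith [Q.cm_pos]
    | (i + 1) =>
      have hcp : (0 : ℝ) < Q.cp := Q.cm_pos.trans Q.cm_lt_cp
      by_cases h1 : ∀ k ∈ Finset.Icc 1 (i + 1 + 1), (∑ m ∈ Finset.Icc 1 k, qp.ξ m (v + 1) ω) <
          qp.X (k + 1) (v + 1 - 1) ω - Q.cp
      · have h1' : ∀ k ∈ Finset.Icc 1 (i + 1), (∑ m ∈ Finset.Icc 1 k, qp.ξ m (v + 1) ω) <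
            qp.X (k + 1) (v + 1 - 1) ω - Q.cp := by
          intro k hk
          exact h1 k (Finset.mem_Icc.mpr ⟨(Finset.mem_Icc.mp hk).1,
            (Finset.mem_Icc.mp hk).2.trans (Nat.le_succ _)⟩)
        rw [qp.X_move (v + 1) ω (i + 1) (Nat.le_add_left 1 v) (Nat.le_add_left 1 i) h1',
          qp.X_move (v + 1) ω (i + 1 + 1) (Nat.le_add_left 1 v) (by omega) h1]
        rw [Finset.sum_Icc_succ_top (by omega : 1 ≤ i + 1 + 1)]
        linarith [hξcm (i + 1 + 1) (by omega)]
      · by_cases h2 : ∀ k ∈ Finset.Icc 1 (i + 1), (∑ m ∈ Finset.Icc 1 k, qp.ξ m (v + 1) ω) <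
            qp.X (k + 1) (v + 1 - 1) ω - Q.cp
        · rw [qp.X_move (v + 1) ω (i + 1) (Nat.le_add_left 1 v) (Nat.le_add_left 1 i) h2,
            qp.X_stay (v + 1) ω (i + 1 + 1) (Nat.le_add_left 1 v) (by omega) h1]
          have hk := h2 (i + 1) (Finset.mem_Icc.mpr ⟨Nat.le_add_left 1 i, le_rfl⟩)
          simp only [Nat.add_sub_cancel] at hk ⊢
          have h3 := ih (i + 1 + 1)
          linarith
        · rw [qp.X_stay (v + 1) ω (i + 1) (Nat.le_add_left 1 v) (Nat.le_add_left 1 i) h2,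
            qp.X_stay (v + 1) ω (i + 1 + 1) (Nat.le_add_left 1 v) (by omega) h1]
          simp only [Nat.add_sub_cancel]
          exact ih (i + 1 + 1)

/-- Lower bound: the `k`-th customer is at least `k * cm`. -/
lemma queue_lower (qp : QueueProcess Q Ω) (ω : Ω) (u : ℕ) :
    ∀ k : ℕ, (k : ℝ) * Q.cm ≤ qp.X k u ω := by
  intro k
  induction k with
  | zero => simp [qp.X_zero]
  | succ k ihk =>
    have := queue_spacing qp ω u k
    push_cast
    linarith

end Aux

theorem counting_functions_coalesce (Q : QueueParams) {Ω : Type} [MeasurableSpace Ω]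
    (qp : QueueProcess Q Ω) (t : ℕ) (ht : 1 ≤ t) (ω : Ω) (w : ℕ)
    (hw : qp.W t ω = (w : ℕ∞)) (x : ℝ) (hx : qp.X w t ω ≤ x) :
    qp.G t x ω = qp.G (t - 1) x ω := by
  obtain ⟨v, rfl⟩ : ∃ v, t = v + 1 := ⟨t - 1, (Nat.succ_pred_eq_of_pos ht).symm⟩
  -- Analyze the wave length
  set A : Set ℕ := {n : ℕ | 1 ≤ n ∧
    qp.X (n + 1) (v + 1 - 1) ω - Q.cp ≤ ∑ m ∈ Finset.Icc 1 n, qp.ξ m (v + 1) ω} with hA_def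
  have hw' : (⨅ n ∈ A, (n : ℕ∞)) = (w : ℕ∞) := hw
  have hAne : A.Nonempty := by
    by_contra h
    rw [Set.not_nonempty_iff_eq_empty] at h
    rw [h] at hw'
    simp at hw'
  have hinf : (⨅ n ∈ A, (n : ℕ∞)) = ((sInf A : ℕ) : ℕ∞) := by
    apply le_antisymm
    · exact iInf₂_le (sInf A) (Nat.sInf_mem hAne)
    · exact le_iInf₂ fun n hn => Nat.cast_le.mpr (Nat.sInf_le hn)
  have hwInf : w = sInf A := by
    have := hw'.symm.trans hinf
    exact_mod_cast this
  have hwA : w ∈ A := hwInf ▸ Nat.sInf_mem hAne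
  have hw1 : 1 ≤ w := hwA.1
  -- For indices at or past the wave front, customers stay
  have hstay : ∀ i, w ≤ i → qp.X i (v + 1) ω = qp.X (i + 1) v ω := by
    intro i hi
    have hneg : ¬ ∀ k ∈ Finset.Icc 1 i, (∑ m ∈ Finset.Icc 1 k, qp.ξ m (v + 1) ω) <
        qp.X (k + 1) (v + 1 - 1) ω - Q.cp := by
      intro h
      have := h w (Finset.mem_Icc.mpr ⟨hw1, hi⟩)
      have h2 := hwA.2
      linarith
    have := qp.X_stay (v + 1) ω i (Nat.le_add_left 1 v) (hw1.trans hi) hneg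
    simpa using this
  -- Basic facts about the counting sups
  have hx0 : (0 : ℝ) ≤ x := by
    have h1 := queue_lower qp ω (v + 1) w
    have : (0 : ℝ) ≤ (w : ℝ) * Q.cm := mul_nonneg (Nat.cast_nonneg w) Q.cm_pos.le
    linarith
  have hbdd : ∀ u : ℕ, BddAbove {k : ℕ | qp.X k u ω ≤ x} := by
    intro u
    refine ⟨Nat.floor (x / Q.cm), fun k hk => Nat.le_floor ?_⟩
    have h1 := queue_lower qp ω u k
    rw [le_div_iff₀ Q.cm_pos]
    exact h1.trans hk
  have hne : ∀ u : ℕ, {k : ℕ | qp.X k u ω ≤ x}.Nonempty := by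
    intro u
    exact ⟨0, by simpa [qp.X_zero] using hx0⟩
  set s := sSup {k : ℕ | qp.X k (v + 1) ω ≤ x} with hs_def
  set s' := sSup {k : ℕ | qp.X k v ω ≤ x} with hs'_def
  have hs_mem : qp.X s (v + 1) ω ≤ x := Nat.sSup_mem (hne (v + 1)) (hbdd (v + 1))
  have hs'_mem : qp.X s' v ω ≤ x := Nat.sSup_mem (hne v) (hbdd v)
  have hs_le : ∀ k, qp.X k (v + 1) ω ≤ x → k ≤ s := fun k hk => le_csSup (hbdd (v + 1)) hk
  have hs'_le : ∀ k, qp.X k v ω ≤ x → k ≤ s' := fun k hk => le_csSup (hbdd v) hk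
  have h1 : w ≤ s := hs_le w hx
  have h2 : w + 1 ≤ s' := hs'_le (w + 1) (by rw [← hstay w le_rfl]; exact hx)
  have h3 : s + 1 ≤ s' := hs'_le (s + 1) (by rw [← hstay s h1]; exact hs_mem)
  have h4 : s' - 1 ≤ s := by
    apply hs_le
    rw [hstay (s' - 1) (by omega)]
    have hseq : s' - 1 + 1 = s' := by omega
    rw [hseq]
    exact hs'_mem
  have hss : s' = s + 1 := by omega
  -- Conclude
  show (↑(v + 1) : ℝ) + (s : ℝ) - x = (↑(v + 1 - 1) : ℝ) + (s' : ℝ) - x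
  rw [hss]
  simp only [Nat.add_sub_cancel]
  push_cast
  ring
end
end
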